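/- arXiv:2510.03828 — 9 statements merged into one kernel-verified Lean document; each statement's English description precedes it below -/
import Mathlib

section
/- Let A, B be integers with 4A³ + 27B² ≠ 0 and set X = max(|A|³, |B|²), D = 4A³ + 27B², Δ = −16·D and j = 1728·4A³/D ∈ ℚ. Then h(Δ) ≤ log X + 6.21, h(j) ≤ log X + 8.85, and log X ≤ 2·max{h(j), h(Δ)} + 0.7. -/
open scoped TensorProduct

noncomputable section

/-- The logarithmic Weil height of a rational number:
`h(p/q) = log max (|p|, q)` for `p/q` in lowest terms. -/
def qh (q : ℚ) : ℝ := Real.log (max (|q.num| : ℝ) (q.den : ℝ))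

/-- The short Weierstrass curve `y² = x³ + Ax + B` over `ℚ`. -/
def Ecurve (A B : ℤ) : WeierstrassCurve.Affine ℚ :=
  { a₁ := 0, a₂ := 0, a₃ := 0, a₄ := (A : ℚ), a₆ := (B : ℚ) }

/-- `X = max (|A|³, |B|²)` as a real number. -/
def Xval (A B : ℤ) : ℝ := max (|(A : ℝ)| ^ 3) (|(B : ℝ)| ^ 2)

/-- The x-coordinate of an affine point (with junk value `0` at the point at infinity). -/
def xCoord {W : WeierstrassCurve.Affine ℚ} : W.Point → ℚ
  | .zero => 0
  | @WeierstrassCurve.Affine.Point.some _ _ _ x _ _ => x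

/-- `hh : W.Point → ℝ` is a canonical height for `W`: it vanishes on points of finite
order, and for every point `P` of infinite order, `h(x(2ⁿ P)) / 4ⁿ → hh P`. -/
def IsCanonicalHeight (W : WeierstrassCurve.Affine ℚ) (hh : W.Point → ℝ) : Prop :=
  (∀ P : W.Point, IsOfFinAddOrder P → hh P = 0) ∧
  (∀ P : W.Point, ¬ IsOfFinAddOrder P →
    Filter.Tendsto (fun n : ℕ => qh (xCoord ((2 ^ n : ℕ) • P)) / 4 ^ n)
      Filter.atTop (nhds (hh P)))

/-- `cos θ_{P,Q} = (ĥ(P+Q) − ĥ(P) − ĥ(Q)) / (2 √(ĥ(P) ĥ(Q)))`. -/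
def cosAngle {W : WeierstrassCurve.Affine ℚ} (hh : W.Point → ℝ) (P Q : W.Point) : ℝ :=
  (hh (P + Q) - hh P - hh Q) / (2 * Real.sqrt (hh P * hh Q))

/-- The rank `dim_ℚ (ℚ ⊗_ℤ G)` of an abelian group `G`. -/
def rankQ (G : Type*) [AddCommGroup G] : ℕ :=
  Module.finrank ℚ (ℚ ⊗[ℤ] G)

end


lemma log496 : Real.log 496 ≤ 6.21 := by
  have h2 : Real.log 2 < 0.6931471808 := Real.log_two_lt_d9
  have e1 : Real.log 496 = 9 * Real.log 2 + Real.log (31/32) := by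
    rw [show (496:ℝ) = 2^9 * (31/32) by norm_num,
      Real.log_mul (by positivity) (by norm_num), Real.log_pow]
    push_cast; ring
  have e2 : Real.log ((31:ℝ)/32) ≤ 31/32 - 1 := Real.log_le_sub_one_of_pos (by norm_num)
  rw [e1]; nlinarith

lemma log6912 : Real.log 6912 ≤ 8.85 := by
  have h2 : Real.log 2 < 0.6931471808 := Real.log_two_lt_d9
  have h2' : (0.6931471803:ℝ) < Real.log 2 := Real.log_two_gt_d9
  have e1 : Real.log 6912 = 13 * Real.log 2 + Real.log (27/32) := by
    rw [show (6912:ℝ) = 2^13 * (27/32) by norm_num,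
      Real.log_mul (by positivity) (by norm_num), Real.log_pow]
    push_cast; ring
  have e2 : (4:ℝ) * Real.log (27/32) = Real.log (531441/524288) - Real.log 2 := by
    rw [show ((531441:ℝ)/524288) = (27/32)^4 * 2 by norm_num,
      Real.log_mul (by positivity) (by norm_num), Real.log_pow]
    push_cast; ring
  have e3 : Real.log ((531441:ℝ)/524288) ≤ 531441/524288 - 1 :=
    Real.log_le_sub_one_of_pos (by norm_num)
  rw [e1]; nlinarith

lemma qh_nonneg (q : ℚ) : 0 ≤ qh q := by
  apply Real.log_nonneg
  exact le_max_of_le_right (by exact_mod_cast q.pos : (1:ℝ) ≤ (q.den:ℝ))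

theorem statement0 (A B : ℤ) (hAB : 4 * A ^ 3 + 27 * B ^ 2 ≠ 0)
    (D : ℤ) (hD : D = 4 * A ^ 3 + 27 * B ^ 2)
    (Δ : ℤ) (hΔ : Δ = -16 * D)
    (j : ℚ) (hj : j = 1728 * (4 * (A : ℚ) ^ 3) / (D : ℚ)) :
    qh (Δ : ℚ) ≤ Real.log (Xval A B) + 6.21 ∧
    qh j ≤ Real.log (Xval A B) + 8.85 ∧
    Real.log (Xval A B) ≤ 2 * max (qh j) (qh (Δ : ℚ)) + 0.7 := by
  have hD0 : D ≠ 0 := by rw [hD]; exact hAB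
  have hD1 : (1:ℝ) ≤ |(D:ℝ)| := by
    rw [← Int.cast_abs]; exact_mod_cast Int.one_le_abs hD0
  have hX1 : (1:ℝ) ≤ Xval A B := by
    rcases eq_or_ne A 0 with hA | hA
    · have hB : B ≠ 0 := by rintro rfl; simp [hA] at hAB
      have h1 : (1:ℝ) ≤ |(B:ℝ)| := by
        rw [← Int.cast_abs]; exact_mod_cast Int.one_le_abs hB
      exact le_max_of_le_right (one_le_pow₀ h1)
    · have h1 : (1:ℝ) ≤ |(A:ℝ)| := by
        rw [← Int.cast_abs]; exact_mod_cast Int.one_le_abs hA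
      exact le_max_of_le_left (one_le_pow₀ h1)
  have hXpos : (0:ℝ) < Xval A B := lt_of_lt_of_le one_pos hX1
  have hA3 : |(A:ℝ)|^3 ≤ Xval A B := le_max_left _ _
  have hB2 : |(B:ℝ)|^2 ≤ Xval A B := le_max_right _ _
  have hDcast : (D:ℝ) = 4*(A:ℝ)^3 + 27*(B:ℝ)^2 := by rw [hD]; push_cast; ring
  have hDX : |(D:ℝ)| ≤ 31 * Xval A B := by
    calc |(D:ℝ)| ≤ 4*|(A:ℝ)|^3 + 27*|(B:ℝ)|^2 := by
          rw [hDcast]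
          calc |4*(A:ℝ)^3 + 27*(B:ℝ)^2| ≤ |4*(A:ℝ)^3| + |27*(B:ℝ)^2| := abs_add_le _ _
            _ = 4*|(A:ℝ)|^3 + 27*|(B:ℝ)|^2 := by
                rw [abs_mul, abs_mul, abs_pow, abs_pow]; norm_num
      _ ≤ 31 * Xval A B := by nlinarith
  -- qh Δ computation
  have habsΔ : |((Δ:ℤ):ℝ)| = 16*|(D:ℝ)| := by
    rw [hΔ]; push_cast; rw [abs_mul]; norm_num
  have hqhΔ : qh (Δ:ℚ) = Real.log (16 * |(D:ℝ)|) := by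
    unfold qh
    rw [Rat.num_intCast, Rat.den_intCast]
    congr 1
    push_cast
    rw [habsΔ]
    exact max_eq_left (by linarith)
  have part1 : qh (Δ:ℚ) ≤ Real.log (Xval A B) + 6.21 := by
    rw [hqhΔ]
    have h1 : (16:ℝ) * |(D:ℝ)| ≤ 496 * Xval A B := by linarith
    calc Real.log (16 * |(D:ℝ)|) ≤ Real.log (496 * Xval A B) :=
          Real.log_le_log (by linarith) h1
      _ = Real.log 496 + Real.log (Xval A B) :=
          Real.log_mul (by norm_num) (ne_of_gt hXpos)
      _ ≤ Real.log (Xval A B) + 6.21 := by linarith [log496]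
  -- j as divInt
  have hj' : j = Rat.divInt (6912 * A^3) D := by
    rw [Rat.divInt_eq_div, hj]; push_cast; ring
  have hnumdvd : j.num ∣ 6912 * A^3 := by rw [hj']; exact Rat.num_dvd _ hD0
  have hdendvd : (j.den : ℤ) ∣ D := by rw [hj']; exact Rat.den_dvd _ _
  have hdenD : (j.den : ℝ) ≤ |(D:ℝ)| := by
    have := Int.le_of_dvd (abs_pos.mpr hD0) ((dvd_abs _ _).mpr hdendvd)
    rw [← Int.cast_abs]; exact_mod_cast this
  have hnumA : |(j.num : ℝ)| ≤ 6912 * |(A:ℝ)|^3 := by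
    rcases eq_or_ne A 0 with hA | hA
    · have : j = 0 := by rw [hj, hA]; norm_num
      simp [this]
    · have h0 : (6912 * A^3 : ℤ) ≠ 0 := by
        intro h; apply hA; nlinarith [pow_eq_zero_iff (n := 3) (by norm_num) |>.mp
          (by linarith : A^3 = 0)]
      have hle : |j.num| ≤ |6912 * A^3| :=
        Int.le_of_dvd (abs_pos.mpr h0) ((abs_dvd _ _).mpr ((dvd_abs _ _).mpr hnumdvd))
      have : |(j.num : ℝ)| ≤ |((6912 * A^3 : ℤ) : ℝ)| := by
        rw [← Int.cast_abs, ← Int.cast_abs]; exact_mod_cast hle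
      calc |(j.num:ℝ)| ≤ |((6912 * A^3 : ℤ) : ℝ)| := this
        _ = 6912 * |(A:ℝ)|^3 := by push_cast; rw [abs_mul, abs_pow]; norm_num
  have hden1 : (1:ℝ) ≤ (j.den : ℝ) := by exact_mod_cast j.pos
  have part2 : qh j ≤ Real.log (Xval A B) + 8.85 := by
    unfold qh
    have hmle : max |(j.num:ℝ)| (j.den:ℝ) ≤ 6912 * Xval A B := by
      apply max_le
      · nlinarith
      · nlinarith
    calc Real.log (max |(j.num:ℝ)| (j.den:ℝ)) ≤ Real.log (6912 * Xval A B) :=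
          Real.log_le_log (by linarith [le_max_right |(j.num:ℝ)| (j.den:ℝ)]) hmle
      _ = Real.log 6912 + Real.log (Xval A B) :=
          Real.log_mul (by norm_num) (ne_of_gt hXpos)
      _ ≤ Real.log (Xval A B) + 8.85 := by linarith [log6912]
  refine ⟨part1, part2, ?_⟩
  -- part 3
  set M := max (qh j) (qh (Δ:ℚ)) with hM
  set E := Real.exp M with hE
  have hM0 : 0 ≤ M := le_trans (qh_nonneg j) (le_max_left _ _)
  have hE1 : 1 ≤ E := Real.one_le_exp hM0
  have hΔE : 16 * |(D:ℝ)| ≤ E := by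
    have h1 : Real.exp (qh (Δ:ℚ)) = 16 * |(D:ℝ)| := by
      rw [hqhΔ]; exact Real.exp_log (by linarith)
    rw [← h1]; exact Real.exp_le_exp.mpr (le_max_right _ _)
  have hjE : |(j:ℝ)| ≤ E := by
    have h1 : |(j:ℝ)| = |(j.num:ℝ)| / (j.den:ℝ) := by
      rw [Rat.cast_def]; rw [abs_div, abs_of_nonneg (by positivity : (0:ℝ) ≤ (j.den:ℝ))]
    have h2 : |(j:ℝ)| ≤ max |(j.num:ℝ)| (j.den:ℝ) := by
      rw [h1]
      exact le_trans (div_le_self (abs_nonneg _) hden1) (le_max_left _ _)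
    have h3 : Real.exp (qh j) = max |(j.num:ℝ)| (j.den:ℝ) :=
      Real.exp_log (by linarith [le_max_right |(j.num:ℝ)| (j.den:ℝ)])
    calc |(j:ℝ)| ≤ max |(j.num:ℝ)| (j.den:ℝ) := h2
      _ = Real.exp (qh j) := h3.symm
      _ ≤ E := Real.exp_le_exp.mpr (le_max_left _ _)
  have hjD : |(j:ℝ)| * |(D:ℝ)| = 6912 * |(A:ℝ)|^3 := by
    have hcast : (j:ℝ) = 6912 * (A:ℝ)^3 / (D:ℝ) := by
      rw [hj]; push_cast; ring
    have hDr : ((D:ℝ)) ≠ 0 := by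
      intro h; apply hD0; exact_mod_cast h
    rw [hcast, abs_div, div_mul_cancel₀ _ (by simpa using hDr)]
    rw [abs_mul, abs_pow]; norm_num
  have hAE : 6912 * |(A:ℝ)|^3 ≤ E^2 := by
    calc 6912 * |(A:ℝ)|^3 = |(j:ℝ)| * |(D:ℝ)| := hjD.symm
      _ ≤ E * (E/16) := by
          apply mul_le_mul hjE (by linarith) (abs_nonneg _) (by linarith)
      _ ≤ E^2 := by nlinarith
  have hBE : 27 * (B:ℝ)^2 ≤ E^2 := by
    have h1 : 27 * (B:ℝ)^2 = (D:ℝ) - 4*(A:ℝ)^3 := by rw [hDcast]; ring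
    have h2 : 27 * (B:ℝ)^2 ≤ |(D:ℝ)| + 4*|(A:ℝ)|^3 := by
      rw [h1]
      calc (D:ℝ) - 4*(A:ℝ)^3 ≤ |(D:ℝ) - 4*(A:ℝ)^3| := le_abs_self _
        _ ≤ |(D:ℝ)| + |4*(A:ℝ)^3| := abs_sub _ _
        _ = |(D:ℝ)| + 4*|(A:ℝ)|^3 := by rw [abs_mul, abs_pow]; norm_num
    nlinarith
  have hXE : Xval A B ≤ E^2 := by
    apply max_le
    · linarith [pow_nonneg (abs_nonneg (A:ℝ)) 3]
    · rw [sq_abs]; linarith [sq_nonneg (B:ℝ)]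
  calc Real.log (Xval A B) ≤ Real.log (E^2) := Real.log_le_log hXpos hXE
    _ = 2 * M := by rw [Real.log_pow, hE, Real.log_exp]; push_cast; ring
    _ ≤ 2 * M + 0.7 := by norm_num
end

section
/- Let 0 ≤ δ ≤ 1 be a real constant. Let P, Q be affine points of E(ℚ) with X^{1/6} ≤ x(P) < x(Q), and suppose x(P) = x₁/s and x(Q) = x₂/s where x₁, x₂ are integers, s is a positive integer, gcd(x₁, s) ≤ s^δ and gcd(x₂, s) ≤ s^δ. Then P + Q is an affine point and h(P+Q) ≤ h(P) + 2·h(Q) + 3δ·log s + 2.9. -/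
open scoped TensorProduct

lemma qh_le_log_max (N D : ℤ) (hD : 0 < D) :
    qh ((N : ℚ) / (D : ℚ)) ≤ Real.log (max (|N| : ℝ) (D : ℝ)) := by
  set r : ℚ := (N : ℚ) / (D : ℚ) with hr
  have hrd : r = Rat.divInt N D := by rw [hr, Rat.divInt_eq_div]
  have hD0 : D ≠ 0 := hD.ne'
  have hnum : |r.num| ≤ |N| := by
    rcases eq_or_ne N 0 with h | h
    · simp [hr, h]
    · have hd : r.num ∣ N := by rw [hrd]; exact Rat.num_dvd N hD0
      exact Int.le_of_dvd (abs_pos.mpr h) ((abs_dvd _ _).mpr ((dvd_abs _ _).mpr hd))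
  have hden : (r.den : ℤ) ≤ D := by
    have : (r.den : ℤ) ∣ D := by rw [hrd]; exact Rat.den_dvd N D
    exact Int.le_of_dvd hD this
  have h1 : (0 : ℝ) < max (|r.num| : ℝ) (r.den : ℝ) := by
    have : (1 : ℝ) ≤ (r.den : ℝ) := by exact_mod_cast r.pos
    exact lt_of_lt_of_le one_pos (this.trans (le_max_right _ _))
  apply Real.log_le_log h1
  apply max_le_max
  · exact_mod_cast hnum
  · exact_mod_cast hden

lemma log_sub_le_qh (x s : ℤ) (hs : 0 < s) (hsx : s ≤ x) :
    Real.log x - Real.log (Int.gcd x s) ≤ qh ((x : ℚ) / (s : ℚ)) := by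
  set r : ℚ := (x : ℚ) / (s : ℚ) with hr
  have hs0 : s ≠ 0 := hs.ne'
  have hrd : r = Rat.divInt x s := by rw [hr, Rat.divInt_eq_div]
  obtain ⟨c, hc1, hc2⟩ := Rat.num_den_mk hs0 hrd
  have hdenpos : (0:ℤ) < (r.den : ℤ) := by exact_mod_cast r.pos
  have hcpos : 0 < c := by nlinarith
  have hnumpos : 0 < r.num := by
    have : 0 < r := by
      rw [hr]
      apply div_pos <;> [exact_mod_cast hs.trans_le hsx; exact_mod_cast hs]
    exact Rat.num_pos.mpr this
  have hgpos : (0:ℤ) < (Int.gcd x s : ℤ) := by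
    exact_mod_cast (Int.gcd_pos_iff (a := x) (b := s)).mpr (Or.inr hs0)
  have hcg : c ≤ (Int.gcd x s : ℤ) :=
    Int.le_of_dvd hgpos (Int.dvd_coe_gcd ⟨r.num, hc1⟩ ⟨r.den, hc2⟩)
  have hxR : (x : ℝ) = (c : ℝ) * (r.num : ℝ) := by exact_mod_cast congrArg (Int.cast : ℤ → ℝ) hc1
  have hlogx : Real.log x = Real.log c + Real.log r.num := by
    rw [hxR, Real.log_mul (by exact_mod_cast hcpos.ne') (by exact_mod_cast hnumpos.ne')]
  have hlogc : Real.log c ≤ Real.log (Int.gcd x s) := by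
    apply Real.log_le_log (by exact_mod_cast hcpos)
    exact_mod_cast hcg
  have hqh : Real.log r.num ≤ qh r := by
    apply Real.log_le_log (by exact_mod_cast hnumpos)
    calc (r.num : ℝ) ≤ (|r.num| : ℝ) := by exact_mod_cast le_abs_self r.num
    _ ≤ _ := le_max_left _ _
  linarith

@[simp] lemma xCoord_some {W : WeierstrassCurve.Affine ℚ} {x y : ℚ} (h : W.Nonsingular x y) :
    xCoord (.some x y h) = x := rfl

set_option maxHeartbeats 1000000 in
theorem statement2 (δ : ℝ) (hδ0 : 0 ≤ δ) (hδ1 : δ ≤ 1)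
    (A B : ℤ) (hAB : 4 * A ^ 3 + 27 * B ^ 2 ≠ 0)
    (P Q : (Ecurve A B).Point) (hP : P ≠ 0) (hQ : Q ≠ 0)
    (hXP : Xval A B ^ ((1 : ℝ) / 6) ≤ ((xCoord P : ℚ) : ℝ))
    (hPQ : xCoord P < xCoord Q)
    (x₁ x₂ s : ℤ) (hs : 0 < s)
    (hx₁ : xCoord P = (x₁ : ℚ) / (s : ℚ)) (hx₂ : xCoord Q = (x₂ : ℚ) / (s : ℚ))
    (hg₁ : (Int.gcd x₁ s : ℝ) ≤ (s : ℝ) ^ δ) (hg₂ : (Int.gcd x₂ s : ℝ) ≤ (s : ℝ) ^ δ) :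
    P + Q ≠ 0 ∧
    qh (xCoord (P + Q)) ≤ qh (xCoord P) + 2 * qh (xCoord Q) + 3 * δ * Real.log s + 2.9 := by
  obtain _ | @⟨xp, yp, hp⟩ := P
  · exact absurd WeierstrassCurve.Affine.Point.zero_def hP
  obtain _ | @⟨xq, yq, hq⟩ := Q
  · exact absurd WeierstrassCurve.Affine.Point.zero_def hQ
  simp only [xCoord_some] at hXP hPQ hx₁ hx₂ ⊢
  have hxx : xp ≠ xq := ne_of_lt hPQ
  rw [WeierstrassCurve.Affine.Point.add_of_X_ne hxx]
  refine ⟨WeierstrassCurve.Affine.Point.some_ne_zero _, ?_⟩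
  rw [xCoord_some]
  -- equations
  have ep : yp ^ 2 = xp ^ 3 + (A:ℚ) * xp + (B:ℚ) := by
    have := ((Ecurve A B).equation_iff xp yp).mp hp.1
    simpa [Ecurve] using this
  have eq' : yq ^ 2 = xq ^ 3 + (A:ℚ) * xq + (B:ℚ) := by
    have := ((Ecurve A B).equation_iff xq yq).mp hq.1
    simpa [Ecurve] using this
  -- x-coordinate of the sum
  have hXadd : (Ecurve A B).addX xp xq ((Ecurve A B).slope xp xq yp yq) =
      ((yp - yq) / (xp - xq)) ^ 2 - xp - xq := by
    rw [WeierstrassCurve.Affine.slope_of_X_ne hxx]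
    simp [WeierstrassCurve.Affine.addX, Ecurve]
  rw [hXadd]
  -- key identity before substitution
  have hne : xp - xq ≠ 0 := sub_ne_zero.mpr hxx
  have hkey : ((((yp - yq) / (xp - xq)) ^ 2 - xp - xq)) * (xq - xp) ^ 2 =
      xp * xq * (xp + xq) + (A:ℚ) * (xp + xq) + 2 * B - 2 * (yp * yq) := by
    have hL2 : ((yp - yq) / (xp - xq)) ^ 2 * (xq - xp) ^ 2 = (yp - yq) ^ 2 := by
      rw [div_pow, show (xq - xp) ^ 2 = (xp - xq) ^ 2 by ring,
        div_mul_cancel₀ _ (pow_ne_zero 2 hne)]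
    linear_combination hL2 + ep + eq'
  subst hx₁ hx₂
  -- basic positivity facts
  have hsQ : ((s:ℚ)) ≠ 0 := by exact_mod_cast hs.ne'
  have hsR : (0:ℝ) < (s:ℝ) := by exact_mod_cast hs
  have hXval1 : (1:ℝ) ≤ Xval A B := by
    rcases eq_or_ne A 0 with rfl | hA0
    · have hB0 : B ≠ 0 := by simpa using hAB
      have h1 : (1:ℝ) ≤ |(B:ℝ)| := by exact_mod_cast Int.one_le_abs hB0
      calc (1:ℝ) = 1 ^ 2 := by norm_num
        _ ≤ |(B:ℝ)| ^ 2 := pow_le_pow_left₀ zero_le_one h1 2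
        _ ≤ _ := le_max_right _ _
    · have h1 : (1:ℝ) ≤ |(A:ℝ)| := by exact_mod_cast Int.one_le_abs hA0
      calc (1:ℝ) = 1 ^ 3 := by norm_num
        _ ≤ |(A:ℝ)| ^ 3 := pow_le_pow_left₀ zero_le_one h1 3
        _ ≤ _ := le_max_left _ _
  have hXPr : Xval A B ^ ((1:ℝ)/6) ≤ (x₁:ℝ)/(s:ℝ) := by push_cast at hXP; exact hXP
  have hxp1R : (1:ℝ) ≤ (x₁:ℝ)/(s:ℝ) := by
    calc (1:ℝ) = (1:ℝ) ^ ((1:ℝ)/6) := (Real.one_rpow _).symm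
      _ ≤ Xval A B ^ ((1:ℝ)/6) := Real.rpow_le_rpow zero_le_one hXval1 (by norm_num)
      _ ≤ _ := hXPr
  have hA2 : |(A:ℝ)| ≤ ((x₁:ℝ)/(s:ℝ)) ^ 2 := by
    have h1 : (|(A:ℝ)| ^ 3) ^ ((1:ℝ)/6) ≤ Xval A B ^ ((1:ℝ)/6) :=
      Real.rpow_le_rpow (by positivity) (le_max_left _ _) (by norm_num)
    have h2 : (|(A:ℝ)| ^ 3) ^ ((1:ℝ)/6) = |(A:ℝ)| ^ ((1:ℝ)/2) := by
      rw [← Real.rpow_natCast |(A:ℝ)| 3, ← Real.rpow_mul (abs_nonneg _)]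
      norm_num
    have h3 : |(A:ℝ)| ^ ((1:ℝ)/2) ≤ (x₁:ℝ)/(s:ℝ) := le_trans (h2 ▸ h1) hXPr
    have h4 : (|(A:ℝ)| ^ ((1:ℝ)/2)) ^ 2 ≤ ((x₁:ℝ)/(s:ℝ)) ^ 2 :=
      pow_le_pow_left₀ (by positivity) h3 2
    calc |(A:ℝ)| = (|(A:ℝ)| ^ ((1:ℝ)/2)) ^ 2 := by
          rw [← Real.rpow_natCast (|(A:ℝ)| ^ ((1:ℝ)/2)) 2, ← Real.rpow_mul (abs_nonneg _)]
          norm_num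
      _ ≤ _ := h4
  have hB2 : |(B:ℝ)| ≤ ((x₁:ℝ)/(s:ℝ)) ^ 3 := by
    have h1 : (|(B:ℝ)| ^ 2) ^ ((1:ℝ)/6) ≤ Xval A B ^ ((1:ℝ)/6) :=
      Real.rpow_le_rpow (by positivity) (le_max_right _ _) (by norm_num)
    have h2 : (|(B:ℝ)| ^ 2) ^ ((1:ℝ)/6) = |(B:ℝ)| ^ ((1:ℝ)/3) := by
      rw [← Real.rpow_natCast |(B:ℝ)| 2, ← Real.rpow_mul (abs_nonneg _)]
      norm_num
    have h3 : |(B:ℝ)| ^ ((1:ℝ)/3) ≤ (x₁:ℝ)/(s:ℝ) := le_trans (h2 ▸ h1) hXPr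
    have h4 : (|(B:ℝ)| ^ ((1:ℝ)/3)) ^ 3 ≤ ((x₁:ℝ)/(s:ℝ)) ^ 3 :=
      pow_le_pow_left₀ (by positivity) h3 3
    calc |(B:ℝ)| = (|(B:ℝ)| ^ ((1:ℝ)/3)) ^ 3 := by
          rw [← Real.rpow_natCast (|(B:ℝ)| ^ ((1:ℝ)/3)) 3, ← Real.rpow_mul (abs_nonneg _)]
          norm_num
      _ ≤ _ := h4
  -- integer facts
  have hsx₁ : s ≤ x₁ := by
    have h : (s:ℝ) ≤ (x₁:ℝ) := by
      have := (le_div_iff₀ hsR).mp hxp1R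
      linarith
    exact_mod_cast h
  have hx₁pos : 0 < x₁ := lt_of_lt_of_le hs hsx₁
  have hx₁x₂ : x₁ < x₂ := by
    have h : (x₁:ℚ) < (x₂:ℚ) := by
      rwa [div_lt_div_iff_of_pos_right (by exact_mod_cast hs : (0:ℚ) < (s:ℚ))] at hPQ
    exact_mod_cast h
  have hx₂pos : 0 < x₂ := hx₁pos.trans hx₁x₂
  have hAZ : |A| * s ^ 2 ≤ x₁ ^ 2 := by
    have h : |(A:ℝ)| * (s:ℝ) ^ 2 ≤ (x₁:ℝ) ^ 2 := by
      have h0 := mul_le_mul_of_nonneg_right hA2 (le_of_lt (by positivity : (0:ℝ) < (s:ℝ)^2))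
      calc |(A:ℝ)| * (s:ℝ)^2 ≤ ((x₁:ℝ)/(s:ℝ))^2 * (s:ℝ)^2 := h0
        _ = (x₁:ℝ)^2 := by field_simp
    exact_mod_cast h
  have hBZ : |B| * s ^ 3 ≤ x₁ ^ 3 := by
    have h : |(B:ℝ)| * (s:ℝ) ^ 3 ≤ (x₁:ℝ) ^ 3 := by
      have h0 := mul_le_mul_of_nonneg_right hB2 (le_of_lt (by positivity : (0:ℝ) < (s:ℝ)^3))
      calc |(B:ℝ)| * (s:ℝ)^3 ≤ ((x₁:ℝ)/(s:ℝ))^3 * (s:ℝ)^3 := h0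
        _ = (x₁:ℝ)^3 := by field_simp
    exact_mod_cast h
  -- the integers m₁, m₂ and t
  set m₁ : ℤ := x₁^3 + A*x₁*s^2 + B*s^3 with hm₁def
  set m₂ : ℤ := x₂^3 + A*x₂*s^2 + B*s^3 with hm₂def
  have hm₁ : ((m₁ : ℤ) : ℚ) = (s:ℚ)^3 * yp^2 := by
    rw [hm₁def, ep]; push_cast; field_simp
  have hm₂ : ((m₂ : ℤ) : ℚ) = (s:ℚ)^3 * yq^2 := by
    rw [hm₂def, eq']; push_cast; field_simp
  obtain ⟨tz, htz⟩ : ∃ tzz : ℤ, ((tzz : ℤ) : ℚ) = (s:ℚ)^3 * (yp * yq) := by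
    set t : ℚ := (s:ℚ)^3 * (yp * yq) with hts
    have ht2 : t^2 = ((m₁ * m₂ : ℤ) : ℚ) := by
      rw [Int.cast_mul, hm₁, hm₂, hts]; ring
    have htden : t.den = 1 := by
      have h1 : (t^2).den = 1 := by rw [ht2]; exact Rat.den_intCast _
      rw [Rat.den_pow, pow_two] at h1
      exact Nat.eq_one_of_mul_eq_one_right h1
    exact ⟨t.num, (Rat.den_eq_one_iff t).mp htden⟩
  -- integer bounds
  have hm₁0 : 0 ≤ m₁ := by
    have h : (0:ℚ) ≤ ((m₁:ℤ):ℚ) := by rw [hm₁]; positivity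
    exact_mod_cast h
  have hm₂0 : 0 ≤ m₂ := by
    have h : (0:ℚ) ≤ ((m₂:ℤ):ℚ) := by rw [hm₂]; positivity
    exact_mod_cast h
  have hpows2 : (0:ℤ) ≤ s^2 := sq_nonneg s
  have hpows3 : (0:ℤ) < s^3 := by positivity
  have hm₁3 : m₁ ≤ 3*x₁^3 := by
    rw [hm₁def]
    linarith only [mul_le_mul_of_nonneg_right (le_abs_self A)
        (mul_nonneg hx₁pos.le hpows2),
      mul_le_mul_of_nonneg_right hAZ hx₁pos.le,
      mul_le_mul_of_nonneg_right (le_abs_self B) hpows3.le, hBZ]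
  have hm₂3 : m₂ ≤ 3*x₂^3 := by
    rw [hm₂def]
    linarith only [mul_le_mul_of_nonneg_right (le_abs_self A)
        (mul_nonneg hx₂pos.le hpows2),
      mul_le_mul_of_nonneg_right hAZ hx₂pos.le,
      mul_le_mul_of_nonneg_right (le_abs_self B) hpows3.le, hBZ,
      pow_le_pow_left₀ hx₁pos.le hx₁x₂.le 3,
      mul_nonneg (mul_nonneg (sub_nonneg.mpr hx₁x₂.le) (add_pos hx₁pos hx₂pos).le) hx₂pos.le]
  have htzZ : tz^2 = m₁ * m₂ := by
    have h : ((tz:ℤ):ℚ)^2 = ((m₁ * m₂ : ℤ):ℚ) := by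
      rw [htz, Int.cast_mul, hm₁, hm₂]; ring
    exact_mod_cast h
  have htzb : |tz| ≤ 3*x₁*x₂^2 := by
    apply abs_le_of_sq_le_sq _ (by positivity)
    have h1 : m₁ * m₂ ≤ (3*x₁^3) * (3*x₂^3) :=
      mul_le_mul hm₁3 hm₂3 hm₂0 (by positivity)
    linarith only [htzZ, h1,
      mul_nonneg (mul_nonneg (sq_nonneg x₁) (pow_nonneg hx₂pos.le 3))
        (sub_nonneg.mpr hx₁x₂.le)]
  -- bounds on numerator and denominator
  set NN : ℤ := x₁*x₂*(x₁+x₂) + A*s^2*(x₁+x₂) + 2*B*s^3 - 2*tz with hNNdef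
  set DD : ℤ := s*(x₂-x₁)^2 with hDDdef
  have hDpos : 0 < DD := by
    rw [hDDdef]; exact mul_pos hs (pow_pos (sub_pos.mpr hx₁x₂) 2)
  have hterm1a : (0:ℤ) ≤ x₁*x₂*(x₁+x₂) := by positivity
  have hterm1b : x₁*x₂*(x₁+x₂) ≤ 2*x₁*x₂^2 := by
    linarith only [mul_nonneg (mul_nonneg hx₁pos.le hx₂pos.le) (sub_nonneg.mpr hx₁x₂.le)]
  have hterm2 : |A| * s^2*(x₁+x₂) ≤ 2*x₁*x₂^2 := by
    nlinarith [mul_le_mul_of_nonneg_right hAZ (by positivity : (0:ℤ) ≤ x₁+x₂),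
      mul_nonneg (mul_nonneg hx₁pos.le (sub_nonneg.mpr hx₁x₂.le))
        (by positivity : (0:ℤ) ≤ 2*x₂+x₁)]
  have hterm2a : A*s^2*(x₁+x₂) ≤ |A| * s^2*(x₁+x₂) := by
    nlinarith [mul_le_mul_of_nonneg_right (le_abs_self A)
      (by positivity : (0:ℤ) ≤ s^2*(x₁+x₂))]
  have hterm2b : -(|A| * s^2*(x₁+x₂)) ≤ A*s^2*(x₁+x₂) := by
    nlinarith [mul_le_mul_of_nonneg_right (neg_abs_le A)
      (by positivity : (0:ℤ) ≤ s^2*(x₁+x₂))]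
  have hterm3 : |B| * s^3 ≤ x₁*x₂^2 := by
    linarith only [hBZ, mul_nonneg (mul_nonneg hx₁pos.le (sub_nonneg.mpr hx₁x₂.le))
      (by positivity : (0:ℤ) ≤ x₂+x₁)]
  have hterm3a : B*s^3 ≤ |B| * s^3 := mul_le_mul_of_nonneg_right (le_abs_self B) hpows3.le
  have hterm3b : -(|B| * s^3) ≤ B*s^3 := by
    linarith only [mul_le_mul_of_nonneg_right (neg_abs_le B) hpows3.le]
  have hNb : |NN| ≤ 12*x₁*x₂^2 := by
    rw [abs_le, hNNdef]
    constructor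
    · linarith only [hterm1a, hterm1b, hterm2, hterm2a, hterm2b, hterm3, hterm3a, hterm3b,
        le_abs_self tz, neg_abs_le tz, htzb]
    · linarith only [hterm1a, hterm1b, hterm2, hterm2a, hterm2b, hterm3, hterm3a, hterm3b,
        le_abs_self tz, neg_abs_le tz, htzb]
  have hDb : DD ≤ 12*x₁*x₂^2 := by
    rw [hDDdef]
    have h2 : (x₂-x₁)^2 ≤ x₂^2 := by
      linarith only [mul_nonneg hx₁pos.le (sub_nonneg.mpr hx₁x₂.le),
        mul_nonneg hx₁pos.le hx₂pos.le]
    linarith only [mul_le_mul hsx₁ h2 (sq_nonneg _) hx₁pos.le,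
      mul_nonneg (mul_nonneg hx₁pos.le hx₂pos.le) hx₂pos.le]
  -- the rational identity
  have hDQ : ((DD:ℤ):ℚ) ≠ 0 := by exact_mod_cast hDpos.ne'
  have hcast : ((DD:ℤ):ℚ) = (s:ℚ)^3 * ((x₂:ℚ)/(s:ℚ) - (x₁:ℚ)/(s:ℚ))^2 := by
    rw [hDDdef]; push_cast; field_simp
  have hRHS : (s:ℚ)^3 * (((x₁:ℚ)/(s:ℚ)) * ((x₂:ℚ)/(s:ℚ)) * ((x₁:ℚ)/(s:ℚ) + (x₂:ℚ)/(s:ℚ)) +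
      (A:ℚ) * ((x₁:ℚ)/(s:ℚ) + (x₂:ℚ)/(s:ℚ)) + 2*B - 2*(yp*yq)) = ((NN:ℤ):ℚ) := by
    rw [hNNdef]
    push_cast
    rw [htz]
    field_simp
  have hreq : ((yp - yq) / ((x₁:ℚ)/(s:ℚ) - (x₂:ℚ)/(s:ℚ))) ^ 2 - (x₁:ℚ)/(s:ℚ) - (x₂:ℚ)/(s:ℚ)
      = ((NN:ℤ):ℚ) / ((DD:ℤ):ℚ) := by
    rw [eq_div_iff hDQ, hcast, show ∀ a b c : ℚ, a * (b * c) = b * (a * c) from fun a b c => by ring]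
    rw [hkey]
    exact hRHS
  rw [hreq]
  -- height bounds
  have hub : qh (((NN:ℤ):ℚ) / ((DD:ℤ):ℚ)) ≤
      Real.log 12 + Real.log x₁ + 2 * Real.log x₂ := by
    calc qh (((NN:ℤ):ℚ) / ((DD:ℤ):ℚ)) ≤ Real.log (max (|NN|:ℝ) ((DD:ℤ):ℝ)) :=
        qh_le_log_max _ _ hDpos
      _ ≤ Real.log (((12*x₁*x₂^2 : ℤ)):ℝ) := by
          apply Real.log_le_log
          · have h1 : (1:ℝ) ≤ ((DD:ℤ):ℝ) := by exact_mod_cast hDpos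
            exact lt_of_lt_of_le one_pos (h1.trans (le_max_right _ _))
          · apply max_le
            · exact_mod_cast hNb
            · exact_mod_cast hDb
      _ = Real.log 12 + Real.log x₁ + 2 * Real.log x₂ := by
          rw [show (((12*x₁*x₂^2 : ℤ)):ℝ) = 12 * (x₁:ℝ) * ((x₂:ℝ))^2 by push_cast; ring,
            Real.log_mul (by positivity) (by positivity : ((x₂:ℝ))^2 ≠ 0),
            Real.log_mul (by norm_num) (by positivity : ((x₁:ℝ)) ≠ 0),
            Real.log_pow]
          push_cast
          ring
  have hq1 : Real.log x₁ - Real.log (Int.gcd x₁ s) ≤ qh ((x₁:ℚ)/(s:ℚ)) :=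
    log_sub_le_qh _ _ hs hsx₁
  have hq2 : Real.log x₂ - Real.log (Int.gcd x₂ s) ≤ qh ((x₂:ℚ)/(s:ℚ)) :=
    log_sub_le_qh _ _ hs (hsx₁.trans hx₁x₂.le)
  have hgb₁ : Real.log (Int.gcd x₁ s) ≤ δ * Real.log s := by
    have h0 : (0:ℝ) < (Int.gcd x₁ s : ℝ) := by
      exact_mod_cast (Int.gcd_pos_iff (a := x₁) (b := s)).mpr (Or.inr hs.ne')
    calc Real.log (Int.gcd x₁ s) ≤ Real.log ((s:ℝ) ^ δ) := Real.log_le_log h0 hg₁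
      _ = δ * Real.log s := Real.log_rpow hsR δ
  have hgb₂ : Real.log (Int.gcd x₂ s) ≤ δ * Real.log s := by
    have h0 : (0:ℝ) < (Int.gcd x₂ s : ℝ) := by
      exact_mod_cast (Int.gcd_pos_iff (a := x₂) (b := s)).mpr (Or.inr hs.ne')
    calc Real.log (Int.gcd x₂ s) ≤ Real.log ((s:ℝ) ^ δ) := Real.log_le_log h0 hg₂
      _ = δ * Real.log s := Real.log_rpow hsR δ
  have hlog12 : Real.log 12 ≤ 2.9 := by
    calc Real.log 12 ≤ Real.log 16 := Real.log_le_log (by norm_num) (by norm_num)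
      _ = 4 * Real.log 2 := by
          rw [show (16:ℝ) = 2^4 by norm_num, Real.log_pow]; norm_num
      _ ≤ 2.9 := by linarith [Real.log_two_lt_d9]
  linarith [hub, hq1, hq2, hgb₁, hgb₂, hlog12]
end

section
/- Let P, Q be affine points of E(ℚ) with X^{1/6} ≤ x(P) < x(Q), and suppose x(P) = x₁/s and x(Q) = x₂/s where x₁, x₂ are integers, s is a positive integer, and gcd(x₁, s) = gcd(x₂, s) = 1. Then P + Q is an affine point and h(P+Q) ≤ h(P) + 2·h(Q) + 2.9. -/
open scoped TensorProduct

private lemma qh_le_aux (q : ℚ) (m d : ℤ) (hd : 0 < d) (hq : q = (m:ℚ)/(d:ℚ)) :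
    qh q ≤ Real.log (max (|m| : ℝ) (d : ℝ)) := by
  have hq' : q = Rat.divInt m d := by rw [hq, Rat.divInt_eq_div]
  have hnum : q.num ∣ m := hq' ▸ Rat.num_dvd m hd.ne'
  have hden : (q.den : ℤ) ∣ d := hq' ▸ Rat.den_dvd m d
  have h1' : |q.num| ≤ |m| := by
    rcases eq_or_ne m 0 with h | h
    · simp [hq, h]
    · exact Int.le_of_dvd (abs_pos.2 h) ((abs_dvd _ _).2 ((dvd_abs _ _).2 hnum))
  have h2 : (q.den : ℤ) ≤ d := Int.le_of_dvd hd hden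
  apply Real.log_le_log
  · have : (1:ℝ) ≤ (q.den : ℝ) := by exact_mod_cast q.pos
    exact lt_of_lt_of_le one_pos (le_max_of_le_right this)
  · exact max_le_max (by exact_mod_cast h1') (by exact_mod_cast h2)

private lemma keyid (a b xp xq yp yq : ℚ) (hne : xp ≠ xq)
    (eP : yp^2 = xp^3 + a*xp + b) (eQ : yq^2 = xq^3 + a*xq + b) :
    ((yp - yq)/(xp - xq))^2 - xp - xq
      = ((xp*xq + a)*(xp+xq) + 2*b - 2*(yp*yq)) / ((xq - xp)^2) := by
  have h1 : xp - xq ≠ 0 := sub_ne_zero.2 hne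
  have h2 : xq - xp ≠ 0 := sub_ne_zero.2 (Ne.symm hne)
  field_simp
  ring_nf
  linear_combination (xq-xp)^2 * eP + (xq-xp)^2 * eQ

private lemma bound_bracket (a b xp xq yp yq : ℚ) (h1xp : 1 ≤ xp) (hpq : xp ≤ xq)
    (hA : |a| ≤ xp^2) (hB : |b| ≤ xp^3)
    (eP : yp^2 = xp^3 + a*xp + b) (eQ : yq^2 = xq^3 + a*xq + b) :
    |(xp*xq + a)*(xp+xq) + 2*b - 2*(yp*yq)| ≤ 12*(xp*xq^2) := by
  have hxp0 : (0:ℚ) < xp := lt_of_lt_of_le one_pos h1xp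
  have hxq0 : (0:ℚ) < xq := lt_of_lt_of_le hxp0 hpq
  have hA' := abs_le.mp hA
  have hB' := abs_le.mp hB
  have hp2 : xp^2 ≤ xq^2 := pow_le_pow_left₀ hxp0.le hpq 2
  have hp3 : xp^3 ≤ xq^3 := pow_le_pow_left₀ hxp0.le hpq 3
  have hyp2 : yp^2 ≤ 3*xp^3 := by
    nlinarith [mul_le_mul_of_nonneg_right hA'.2 hxp0.le, hB'.2]
  have hyq2 : yq^2 ≤ 3*xq^3 := by
    nlinarith [mul_le_mul_of_nonneg_right hA'.2 hxq0.le, hB'.2, hp3,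
      mul_le_mul_of_nonneg_right hp2 hxq0.le]
  have hyy2 : (yp*yq)^2 ≤ (3*(xp*xq^2))^2 := by
    nlinarith [mul_le_mul hyp2 hyq2 (sq_nonneg yq) (by positivity : (0:ℚ) ≤ 3*xp^3),
      mul_le_mul_of_nonneg_left hpq (by positivity : (0:ℚ) ≤ 9*xp^2*xq^3)]
  have hcross := abs_le_of_sq_le_sq' hyy2 (by positivity)
  have hxp3 : xp^3 ≤ xp*xq^2 := by nlinarith [hp2, hxp0]
  have hfac1 : 0 ≤ xp*xq + a := by
    nlinarith [hA'.1, mul_le_mul_of_nonneg_left hpq hxp0.le]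
  have hfac2 : (0:ℚ) < xp + xq := by linarith
  have hu1 : xp*xq + a ≤ 2*(xp*xq) := by
    nlinarith [hA'.2, mul_le_mul_of_nonneg_left hpq hxp0.le]
  have hu2 : xp + xq ≤ 2*xq := by linarith
  have hup : (xp*xq + a)*(xp+xq) ≤ (2*(xp*xq))*(2*xq) :=
    mul_le_mul hu1 hu2 hfac2.le (by positivity)
  have hring : (2*(xp*xq))*(2*xq) = 4*(xp*xq^2) := by ring
  have hup4 : (xp*xq + a)*(xp+xq) ≤ 4*(xp*xq^2) := by linarith
  rw [abs_le]
  constructor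
  · linarith [mul_nonneg hfac1 hfac2.le, hB'.1, hcross.2, hxp3,
      (by positivity : (0:ℚ) ≤ xp*xq^2)]
  · linarith [hup4, hB'.2, hcross.1, hxp3]

set_option maxHeartbeats 2000000 in
theorem statement3 (A B : ℤ) (hAB : 4 * A ^ 3 + 27 * B ^ 2 ≠ 0)
    (P Q : (Ecurve A B).Point) (hP : P ≠ 0) (hQ : Q ≠ 0)
    (hXP : Xval A B ^ ((1 : ℝ) / 6) ≤ ((xCoord P : ℚ) : ℝ))
    (hPQ : xCoord P < xCoord Q)
    (x₁ x₂ s : ℤ) (hs : 0 < s)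
    (hx₁ : xCoord P = (x₁ : ℚ) / (s : ℚ)) (hx₂ : xCoord Q = (x₂ : ℚ) / (s : ℚ))
    (hg₁ : Int.gcd x₁ s = 1) (hg₂ : Int.gcd x₂ s = 1) :
    P + Q ≠ 0 ∧
    qh (xCoord (P + Q)) ≤ qh (xCoord P) + 2 * qh (xCoord Q) + 2.9 := by
  obtain _ | @⟨xp, yp, h₁⟩ := P
  · exact absurd rfl hP
  obtain _ | @⟨xq, yq, h₂⟩ := Q
  · exact absurd rfl hQ
  simp only [xCoord] at hXP hPQ hx₁ hx₂ ⊢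
  have hxne : xp ≠ xq := ne_of_lt hPQ
  have hadd : WeierstrassCurve.Affine.Point.some _ _ h₁ + WeierstrassCurve.Affine.Point.some _ _ h₂
      = WeierstrassCurve.Affine.Point.some _ _
        (WeierstrassCurve.Affine.nonsingular_add h₁ h₂ fun h => (hxne h.1).elim) :=
    WeierstrassCurve.Affine.Point.add_of_X_ne hxne
  rw [hadd]
  refine ⟨WeierstrassCurve.Affine.Point.some_ne_zero _, ?_⟩
  simp only [xCoord]
  -- the curve equations
  have eP : yp^2 = xp^3 + (A:ℚ)*xp + (B:ℚ) := by
    have := (WeierstrassCurve.Affine.equation_iff xp yp).mp h₁.1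
    simpa [Ecurve] using this
  have eQ : yq^2 = xq^3 + (A:ℚ)*xq + (B:ℚ) := by
    have := (WeierstrassCurve.Affine.equation_iff xq yq).mp h₂.1
    simpa [Ecurve] using this
  -- the x-coordinate of the sum
  have hx3 : WeierstrassCurve.Affine.addX (Ecurve A B) xp xq
        ((Ecurve A B).slope xp xq yp yq)
      = ((xp*xq + (A:ℚ))*(xp+xq) + 2*(B:ℚ) - 2*(yp*yq)) / ((xq - xp)^2) := by
    rw [WeierstrassCurve.Affine.slope_of_X_ne hxne]
    show _ ^ 2 + (Ecurve A B).a₁ * _ - (Ecurve A B).a₂ - xp - xq = _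
    simp only [Ecurve]
    rw [← keyid (A:ℚ) (B:ℚ) xp xq yp yq hxne eP eQ]
    ring
  -- basic size facts from X^(1/6) ≤ xp
  have hX0 : (0:ℝ) ≤ Xval A B := le_max_of_le_left (by positivity)
  have hX1 : (1:ℝ) ≤ Xval A B := by
    rcases eq_or_ne A 0 with hA0 | hA0
    · have hB0 : B ≠ 0 := by rintro rfl; simp [hA0] at hAB
      have : (1:ℝ) ≤ |(B:ℝ)| := by exact_mod_cast Int.one_le_abs hB0
      exact le_max_of_le_right (one_le_pow₀ this)
    · have : (1:ℝ) ≤ |(A:ℝ)| := by exact_mod_cast Int.one_le_abs hA0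
      exact le_max_of_le_left (one_le_pow₀ this)
  set t : ℝ := Xval A B ^ ((1:ℝ)/6) with ht_def
  have ht0 : 0 ≤ t := Real.rpow_nonneg hX0 _
  have ht6 : t^(6:ℕ) = Xval A B := by
    rw [ht_def, ← Real.rpow_natCast (Xval A B ^ ((1:ℝ)/6)) 6, ← Real.rpow_mul hX0]
    norm_num
  have ht1 : (1:ℝ) ≤ t := by
    rw [ht_def]
    calc (1:ℝ) = 1 ^ ((1:ℝ)/6) := (Real.one_rpow _).symm
    _ ≤ Xval A B ^ ((1:ℝ)/6) := Real.rpow_le_rpow (by norm_num) hX1 (by norm_num)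
  have h1xp : (1:ℚ) ≤ xp := by exact_mod_cast le_trans ht1 hXP
  have hAr : |(A:ℝ)| ≤ ((xp:ℚ):ℝ)^2 := by
    have h3 : |(A:ℝ)|^3 ≤ (t^2)^3 := by
      calc |(A:ℝ)|^3 ≤ Xval A B := le_max_left _ _
      _ = t^(6:ℕ) := ht6.symm
      _ = (t^2)^3 := by ring
    have h4 : |(A:ℝ)| ≤ t^2 :=
      (pow_le_pow_iff_left₀ (abs_nonneg _) (by positivity) (by norm_num)).mp h3
    calc |(A:ℝ)| ≤ t^2 := h4
    _ ≤ ((xp:ℚ):ℝ)^2 := by apply pow_le_pow_left₀ ht0 hXP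
  have hBr : |(B:ℝ)| ≤ ((xp:ℚ):ℝ)^3 := by
    have h3 : |(B:ℝ)|^2 ≤ (t^3)^2 := by
      calc |(B:ℝ)|^2 ≤ Xval A B := le_max_right _ _
      _ = t^(6:ℕ) := ht6.symm
      _ = (t^3)^2 := by ring
    have h4 : |(B:ℝ)| ≤ t^3 :=
      (pow_le_pow_iff_left₀ (abs_nonneg _) (by positivity) (by norm_num)).mp h3
    calc |(B:ℝ)| ≤ t^3 := h4
    _ ≤ ((xp:ℚ):ℝ)^3 := by apply pow_le_pow_left₀ ht0 hXP
  have hA : |(A:ℚ)| ≤ xp^2 := by exact_mod_cast hAr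
  have hB : |(B:ℚ)| ≤ xp^3 := by exact_mod_cast hBr
  have hpq : xp ≤ xq := le_of_lt hPQ
  have hs0 : (s:ℚ) ≠ 0 := by positivity
  have hsq0 : (0:ℚ) < (s:ℚ) := by exact_mod_cast hs
  -- s ≤ x₁ < x₂ as integers
  have hx1s : (s:ℚ) ≤ (x₁:ℚ) := by
    have : (1:ℚ) ≤ (x₁:ℚ)/(s:ℚ) := hx₁ ▸ h1xp
    calc (s:ℚ) = 1 * s := (one_mul _).symm
    _ ≤ ((x₁:ℚ)/s) * s := by gcongr
    _ = x₁ := by field_simp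
  have hx1s' : s ≤ x₁ := by exact_mod_cast hx1s
  have hx12 : x₁ < x₂ := by
    have h : (x₁:ℚ)/s < (x₂:ℚ)/s := by rw [← hx₁, ← hx₂]; exact hPQ
    have := (div_lt_div_iff_of_pos_right hsq0).mp h
    exact_mod_cast this
  -- denominators of y-coordinates: den(y)² = s³
  have key : ∀ (xi : ℤ) (x y : ℚ), Int.gcd xi s = 1 → x = (xi:ℚ)/(s:ℚ) →
      y^2 = x^3 + (A:ℚ)*x + (B:ℚ) → ((y.den:ℤ))^2 = s^3 := by
    intro xi x y hg hx hy
    set N : ℤ := xi^3 + A*s^2*xi + B*s^3 with hN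
    have hy2 : y^2 = (N:ℚ)/((s^3 : ℤ):ℚ) := by
      rw [hy, hx, hN]; field_simp; push_cast; ring
    have hcoN : IsCoprime N (s^3) := by
      have h0 : IsCoprime (xi:ℤ) s := Int.isCoprime_iff_gcd_eq_one.mpr hg
      have h1 : IsCoprime (xi^3) s := h0.pow_left
      have h2 : IsCoprime N s := by
        have : N = xi^3 + s * (A*s*xi + B*s^2) := by rw [hN]; ring
        rw [this]
        exact h1.add_mul_left_left _
      exact h2.pow_right
    have hgN : Nat.Coprime N.natAbs (s^3).natAbs := by
      have := Int.isCoprime_iff_gcd_eq_one.mp hcoN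
      exact this
    have hs3 : (0:ℤ) < s^3 := by positivity
    have hden : (((N:ℚ)/((s^3:ℤ):ℚ)).den : ℤ) = s^3 := Rat.den_div_eq_of_coprime hs3 hgN
    have hmul : (y^2).den = y.den * y.den := by
      rw [sq]; exact Rat.mul_self_den y
    have : ((y.den * y.den : ℕ) : ℤ) = s^3 := by
      rw [← hmul, hy2]; exact_mod_cast hden
    rw [← this]; push_cast; ring
  have hvp : ((yp.den:ℤ))^2 = s^3 := key x₁ xp yp hg₁ hx₁ eP
  have hvq : ((yq.den:ℤ))^2 = s^3 := key x₂ xq yq hg₂ hx₂ eQ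
  have hvpq : yp.den = yq.den := by
    have h : yp.den^2 = yq.den^2 := by exact_mod_cast hvp.trans hvq.symm
    exact Nat.pow_left_injective (by norm_num) h
  -- y_P y_Q = (num·num)/s³
  have hyy : yp * yq = ((yp.num * yq.num : ℤ):ℚ) / ((s^3:ℤ):ℚ) := by
    have hd : ((yp.den:ℚ) * (yq.den:ℚ)) = ((s^3:ℤ):ℚ) := by
      have h : ((yp.den:ℤ)) * ((yq.den:ℤ)) = s^3 := by rw [hvpq, ← sq]; exact hvq
      exact_mod_cast h
    calc yp * yq = ((yp.num:ℚ)/(yp.den:ℚ)) * ((yq.num:ℚ)/(yq.den:ℚ)) := by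
          rw [Rat.num_div_den, Rat.num_div_den]
    _ = ((yp.num * yq.num : ℤ):ℚ) / ((yp.den:ℚ)*(yq.den:ℚ)) := by push_cast; ring
    _ = ((yp.num * yq.num : ℤ):ℚ) / ((s^3:ℤ):ℚ) := by rw [hd]
  -- integer numerator and denominator of x(P+Q)
  set M : ℤ := (x₁*x₂ + A*s^2)*(x₁+x₂) + 2*B*s^3 - 2*(yp.num*yq.num) with hM
  set D : ℤ := s*(x₂-x₁)^2 with hD
  have hx21 : (x₂:ℚ) - (x₁:ℚ) ≠ 0 := by
    have : (x₁:ℚ) < (x₂:ℚ) := by exact_mod_cast hx12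
    exact sub_ne_zero.2 (ne_of_gt this)
  have hD0 : 0 < D := mul_pos hs (pow_pos (sub_pos.2 hx12) 2)
  have hMD : ((xp*xq + (A:ℚ))*(xp+xq) + 2*(B:ℚ) - 2*(yp*yq)) / ((xq - xp)^2)
      = (M:ℚ)/(D:ℚ) := by
    rw [hx₁, hx₂, hyy, hM, hD]
    push_cast
    field_simp
  -- size bounds
  have hbr := bound_bracket (A:ℚ) (B:ℚ) xp xq yp yq h1xp hpq hA hB eP eQ
  have hMeq : (M:ℚ) = (s:ℚ)^3 * ((xp*xq + (A:ℚ))*(xp+xq) + 2*(B:ℚ) - 2*(yp*yq)) := by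
    rw [hx₁, hx₂, hyy, hM]; push_cast; field_simp
  have hid : (s:ℚ)^3 * (xp*xq^2) = (x₁:ℚ)*(x₂:ℚ)^2 := by
    rw [hx₁, hx₂]; field_simp
  have hMQ : |(M:ℚ)| ≤ 12*((x₁:ℚ)*(x₂:ℚ)^2) := by
    rw [hMeq, abs_mul, abs_of_nonneg (by positivity : (0:ℚ) ≤ (s:ℚ)^3)]
    calc (s:ℚ)^3 * |(xp*xq + (A:ℚ))*(xp+xq) + 2*(B:ℚ) - 2*(yp*yq)|
        ≤ (s:ℚ)^3 * (12*(xp*xq^2)) := mul_le_mul_of_nonneg_left hbr (by positivity)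
    _ = 12*((x₁:ℚ)*(x₂:ℚ)^2) := by rw [← hid]; ring
  have hMZ : |M| ≤ 12*(x₁*x₂^2) := by exact_mod_cast hMQ
  have hx10 : 0 < x₁ := lt_of_lt_of_le hs hx1s'
  have hx20 : 0 < x₂ := lt_trans hx10 hx12
  have hDZ : D ≤ 12*(x₁*x₂^2) := by
    rw [hD]
    nlinarith [mul_le_mul_of_nonneg_right hx1s' (sq_nonneg (x₂-x₁)), hx10, hx12,
      mul_pos (mul_pos hx10 hx10) (by linarith : (0:ℤ) < 2*x₂ - x₁),
      mul_pos hx10 (mul_pos hx20 hx20)]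
  -- assemble
  have haddx : (Ecurve A B).addX xp xq ((Ecurve A B).slope xp xq yp yq) = (M:ℚ)/(D:ℚ) :=
    hx3.trans hMD
  have hstep1 := qh_le_aux _ M D hD0 haddx
  have hmaxpos : (0:ℝ) < max (|M| : ℝ) (D:ℝ) := by
    have : (0:ℝ) < (D:ℝ) := by exact_mod_cast hD0
    exact lt_of_lt_of_le this (le_max_right _ _)
  have hmaxle : max (|M| : ℝ) ((D:ℤ):ℝ) ≤ ((12*(x₁*x₂^2) : ℤ) : ℝ) := by
    apply max_le
    · exact_mod_cast hMZ
    · exact_mod_cast hDZ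
  have hstep2 : Real.log (max (|M|:ℝ) (D:ℝ)) ≤ Real.log (((12*(x₁*x₂^2):ℤ)):ℝ) :=
    Real.log_le_log hmaxpos hmaxle
  have hcast : (((12*(x₁*x₂^2):ℤ)):ℝ) = 12*((x₁:ℝ)*(x₂:ℝ)^2) := by push_cast; ring
  have hx1R : (0:ℝ) < (x₁:ℝ) := by exact_mod_cast hx10
  have hx2R : (0:ℝ) < (x₂:ℝ) := by exact_mod_cast hx20
  have hlog : Real.log (((12*(x₁*x₂^2):ℤ)):ℝ)
      = Real.log 12 + Real.log (x₁:ℝ) + 2*Real.log (x₂:ℝ) := by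
    rw [hcast, Real.log_mul (by norm_num) (by positivity),
      Real.log_mul (by positivity) (by positivity), Real.log_pow]
    push_cast; ring
  have hqP' : qh xp = Real.log (x₁:ℝ) := by
    rw [hx₁]
    unfold qh
    rw [Rat.num_div_eq_of_coprime hs hg₁]
    set d : ℕ := ((x₁:ℚ)/(s:ℚ)).den with hd
    have hden : (d:ℤ) = s := Rat.den_div_eq_of_coprime hs hg₁
    clear_value d
    have hden' : (d:ℝ) = ((s:ℤ):ℝ) := by exact_mod_cast hden
    rw [hden', abs_of_pos (show (0:ℝ) < ((x₁:ℤ):ℝ) by exact_mod_cast hx10),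
      max_eq_left (by exact_mod_cast hx1s' : ((s:ℤ):ℝ) ≤ ((x₁:ℤ):ℝ))]
  have hqQ' : qh xq = Real.log (x₂:ℝ) := by
    rw [hx₂]
    unfold qh
    rw [Rat.num_div_eq_of_coprime hs hg₂]
    set d : ℕ := ((x₂:ℚ)/(s:ℚ)).den with hd
    have hden : (d:ℤ) = s := Rat.den_div_eq_of_coprime hs hg₂
    clear_value d
    have hden' : (d:ℝ) = ((s:ℤ):ℝ) := by exact_mod_cast hden
    have hsx2 : s ≤ x₂ := le_trans hx1s' (le_of_lt hx12)
    rw [hden', abs_of_pos (show (0:ℝ) < ((x₂:ℤ):ℝ) by exact_mod_cast hx20),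
      max_eq_left (by exact_mod_cast hsx2 : ((s:ℤ):ℝ) ≤ ((x₂:ℤ):ℝ))]
  have hlog12 : Real.log 12 ≤ 2.9 := by
    have h1 : Real.log 12 ≤ Real.log 16 := Real.log_le_log (by norm_num) (by norm_num)
    have h2 : (16:ℝ) = 2^(4:ℕ) := by norm_num
    have h3 : Real.log 16 = 4 * Real.log 2 := by rw [h2, Real.log_pow]; norm_num
    nlinarith [Real.log_two_lt_d9]
  rw [hqP', hqQ']
  linarith [hstep1, hstep2, le_of_eq hlog, hlog12]
end

section
/- Let P, Q be affine points of E(ℚ) with X^{1/6} ≤ x(P) < x(Q), and suppose x(P) = x₁/s and x(Q) = x₂/s where x₁, x₂ are integers and s is a positive integer. Then P + Q is an affine point and h(P+Q) ≤ h(P) + 2·h(Q) + 3·log s + 2.9. -/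
open scoped TensorProduct

set_option maxHeartbeats 1000000 in
private lemma aux_qh_div_le (N D : ℤ) (hD : D ≠ 0) :
    qh ((N:ℚ)/(D:ℚ)) ≤ Real.log (max |(N:ℝ)| |(D:ℝ)|) := by
  set q : ℚ := (N:ℚ)/(D:ℚ) with hq
  have hq' : q = Rat.divInt N D := by rw [Rat.divInt_eq_div]
  have hden : (q.den : ℤ) ∣ D := hq' ▸ Rat.den_dvd N D
  have hnum : q.num ∣ N := by rw [hq']; exact Rat.num_dvd N hD
  have h1 : (q.den : ℤ) ≤ |D| := Int.le_of_dvd (abs_pos.mpr hD) (hden.trans ((dvd_abs D D).mpr dvd_rfl))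
  have h2 : |q.num| ≤ max |N| |D| := by
    rcases eq_or_ne N 0 with h | h
    · have : q = 0 := by simp [hq, h]
      simp [this]
    · refine le_max_of_le_left (Int.le_of_dvd (abs_pos.mpr h) ?_)
      exact (abs_dvd _ _).mpr ((dvd_abs _ _).mpr hnum)
  have hDpos : (1:ℤ) ≤ |D| := abs_pos.mpr hD
  unfold qh
  apply Real.log_le_log
  · have : (1:ℝ) ≤ (q.den:ℝ) := by exact_mod_cast q.pos
    linarith [le_max_right (|(q.num:ℝ)|) ((q.den:ℝ))]
  · apply max_le
    · calc (|(q.num:ℝ)|) = ((|q.num|:ℤ):ℝ) := by push_cast; ring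
        _ ≤ max (|(N:ℝ)|) (|(D:ℝ)|) := by
            rcases le_max_iff.mp h2 with h | h
            · refine le_max_of_le_left (((by exact_mod_cast h : ((|q.num|:ℤ):ℝ) ≤ ((|N|:ℤ):ℝ))).trans_eq (by push_cast; ring))
            · exact le_max_of_le_right ((by exact_mod_cast h : ((|q.num|:ℤ):ℝ) ≤ ((|D|:ℤ):ℝ)).trans_eq (by push_cast; ring))
    · refine le_max_of_le_right ?_
      calc ((q.den:ℝ)) = (((q.den:ℤ)):ℝ) := by push_cast; ring
        _ ≤ ((|D|:ℤ):ℝ) := by exact_mod_cast h1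
        _ = |(D:ℝ)| := by push_cast; ring

private lemma aux_log_le_qh (q : ℚ) (h : 1 ≤ q) : Real.log (q:ℝ) ≤ qh q := by
  have h0 : (0:ℚ) < q := lt_of_lt_of_le one_pos h
  have hnum : q ≤ (q.num : ℚ) := by
    conv_lhs => rw [← Rat.num_div_den q]
    apply div_le_self
    · exact_mod_cast Rat.num_nonneg.mpr h0.le
    · exact_mod_cast q.pos
  have hle : (q:ℝ) ≤ |(q.num:ℝ)| := by
    rw [abs_of_nonneg (by exact_mod_cast Rat.num_nonneg.mpr h0.le)]
    exact_mod_cast hnum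
  apply Real.log_le_log (by exact_mod_cast h0)
  exact le_max_of_le_left hle

private lemma aux_log12 : Real.log 12 ≤ 2.9 := by
  rw [Real.log_le_iff_le_exp (by norm_num)]
  have h1 : (2.9:ℝ) = 1 + 1 + 0.9 := by norm_num
  rw [h1, Real.exp_add, Real.exp_add]
  nlinarith [Real.exp_one_gt_d9, Real.add_one_le_exp (0.9:ℝ), Real.exp_pos 1]

private lemma aux_step1 (Aq Bq : ℚ) (xp xq yp yq : ℚ) (hne : xp ≠ xq)
    (h1 : yp^2 = xp^3 + Aq*xp + Bq)
    (h2 : yq^2 = xq^3 + Aq*xq + Bq) :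
    ((yp-yq)/(xp-xq))^2 - xp - xq
      = (xp*xq*(xp+xq) + Aq*(xp+xq) + 2*Bq - 2*(yp*yq))/((xp-xq)^2) := by
  have h12 : xp - xq ≠ 0 := sub_ne_zero.mpr hne
  field_simp
  linear_combination h1 + h2

private lemma aux_step2 (A B x₁ x₂ s m : ℤ) (hs : (s:ℚ) ≠ 0) (hne : (x₁:ℚ) ≠ (x₂:ℚ)) (yp yq : ℚ)
    (hm : yp*yq = (m:ℚ)/(s:ℚ)^3) :
    ((x₁/s)*(x₂/s)*((x₁:ℚ)/s+(x₂:ℚ)/s) + A*((x₁:ℚ)/s+(x₂:ℚ)/s) + 2*B - 2*(yp*yq))/(((x₁:ℚ)/s-(x₂:ℚ)/s)^2)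
      = ((x₁*x₂*(x₁+x₂) + A*s^2*(x₁+x₂) + 2*B*s^3 - 2*m : ℤ) : ℚ) / ((s*(x₂-x₁)^2 : ℤ) : ℚ) := by
  have h12 : (x₁:ℚ) - x₂ ≠ 0 := sub_ne_zero.mpr hne
  have h21 : (x₂:ℚ) - x₁ ≠ 0 := sub_ne_zero.mpr (Ne.symm hne)
  rw [hm]
  push_cast
  field_simp
  ring

set_option maxHeartbeats 1000000 in
private lemma aux_bounds (A B x₁ x₂ s m f₁ f₂ : ℤ) (hs : 0 < s) (hsx : s ≤ x₁) (h12 : x₁ < x₂)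
    (hA : |A| * s^2 ≤ x₁^2) (hB : |B| * s^3 ≤ x₁^3)
    (hf₁ : f₁ = x₁^3 + A*x₁*s^2 + B*s^3) (hf₂ : f₂ = x₂^3 + A*x₂*s^2 + B*s^3)
    (hf₁0 : 0 ≤ f₁) (hf₂0 : 0 ≤ f₂) (hm : m^2 = f₁*f₂) :
    |x₁*x₂*(x₁+x₂) + A*s^2*(x₁+x₂) + 2*B*s^3 - 2*m| ≤ 12*x₁*x₂^2 ∧
    |s*(x₂-x₁)^2| ≤ 12*x₁*x₂^2 := by
  have hx₁ : 0 < x₁ := lt_of_lt_of_le hs hsx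
  have hx₂ : 0 < x₂ := lt_trans hx₁ h12
  have hAa : A ≤ |A| := le_abs_self A
  have hAb : -A ≤ |A| := neg_le_abs A
  have hBa : B ≤ |B| := le_abs_self B
  have hBb : -B ≤ |B| := neg_le_abs B
  have hA0 : 0 ≤ |A| := abs_nonneg A
  have hB0 : 0 ≤ |B| := abs_nonneg B
  have k1 : A*(x₁*s^2) ≤ |A| * (x₁*s^2) := mul_le_mul_of_nonneg_right hAa (by positivity)
  have k2 : (|A| * s^2)*x₁ ≤ x₁^2*x₁ := mul_le_mul_of_nonneg_right hA hx₁.le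
  have k3 : B*s^3 ≤ |B| * s^3 := mul_le_mul_of_nonneg_right hBa (by positivity)
  have k4 : A*(x₂*s^2) ≤ |A| * (x₂*s^2) := mul_le_mul_of_nonneg_right hAa (by positivity)
  have k5 : (|A| * s^2)*x₂ ≤ x₁^2*x₂ := mul_le_mul_of_nonneg_right hA hx₂.le
  have hsq : x₁^2 ≤ x₂^2 := by nlinarith
  have k6 : x₁^2*x₂ ≤ x₂^2*x₂ := mul_le_mul_of_nonneg_right hsq hx₂.le
  have c1 : x₁^3 ≤ x₁*x₂^2 := by nlinarith
  have c2 : x₁^2*x₂ ≤ x₁*x₂^2 := by nlinarith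
  have k7 : x₁^3 ≤ x₂^3 := by nlinarith
  have hf₁le : f₁ ≤ 3*x₁^3 := by linarith
  have hf₂le : f₂ ≤ 3*x₂^3 := by linarith
  have h9 : m^2 ≤ (3*x₁*x₂^2)^2 := by nlinarith [mul_le_mul hf₁le hf₂le hf₂0 (by positivity : (0:ℤ) ≤ 3*x₁^3)]
  have hmab : -(3*x₁*x₂^2) ≤ m ∧ m ≤ 3*x₁*x₂^2 := abs_le_of_sq_le_sq' h9 (by positivity)
  have kA2 : A*(s^2*(x₁+x₂)) ≤ |A| * (s^2*(x₁+x₂)) := mul_le_mul_of_nonneg_right hAa (by positivity)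
  have kA3 : (-A)*(s^2*(x₁+x₂)) ≤ |A| * (s^2*(x₁+x₂)) := mul_le_mul_of_nonneg_right hAb (by positivity)
  have kB2 : (-B)*s^3 ≤ |B| * s^3 := mul_le_mul_of_nonneg_right hBb (by positivity)
  have cA : |A| * (s^2*(x₁+x₂)) ≤ x₁^2*x₁ + x₁^2*x₂ := by linarith [k2, k5]
  have pos1 : 0 ≤ x₁*x₂^2 := by positivity
  have pos2 : 0 ≤ x₁^2*x₂ := by positivity
  refine ⟨abs_le.mpr ⟨by linarith [hmab.1, hmab.2], by linarith [hmab.1, hmab.2]⟩, ?_⟩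
  rw [abs_of_nonneg (by positivity)]
  have d1 : s*x₂^2 ≤ x₁*x₂^2 := mul_le_mul_of_nonneg_right hsx (by positivity)
  have d2 : (s*x₁)*x₁ ≤ (s*x₁)*x₂ := mul_le_mul_of_nonneg_left h12.le (by positivity)
  have d3 : 0 ≤ s*x₁*x₂ := by positivity
  nlinarith [d1, d2, d3]

set_option maxHeartbeats 1000000 in
private lemma aux_real (A B x₁ s : ℤ) (hs : 0 < s) (hAB : 4 * A ^ 3 + 27 * B ^ 2 ≠ 0)
    (hXP : Xval A B ^ ((1:ℝ)/6) ≤ (x₁:ℝ)/s) :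
    s ≤ x₁ ∧ |A| * s^2 ≤ x₁^2 ∧ |B| * s^3 ≤ x₁^3 := by
  have hsR : (0:ℝ) < s := by exact_mod_cast hs
  have habs : ∀ n : ℤ, n ≠ 0 → (1:ℝ) ≤ |(n:ℝ)| := by
    intro n hn
    have : (1:ℤ) ≤ |n| := Int.one_le_abs hn
    calc (1:ℝ) ≤ ((|n|:ℤ):ℝ) := by exact_mod_cast this
      _ = |(n:ℝ)| := by push_cast; ring
  have hX1 : (1:ℝ) ≤ Xval A B := by
    rcases eq_or_ne A 0 with h | h
    · have hB : B ≠ 0 := by rintro rfl; simp [h] at hAB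
      have := habs B hB
      exact le_max_of_le_right (one_le_pow₀ this)
    · have := habs A h
      exact le_max_of_le_left (one_le_pow₀ this)
  have hX0 : (0:ℝ) ≤ Xval A B := le_trans zero_le_one hX1
  have h6 : (1:ℝ) ≤ Xval A B ^ ((1:ℝ)/6) := by
    calc (1:ℝ) = (1:ℝ) ^ ((1:ℝ)/6) := (Real.one_rpow _).symm
      _ ≤ _ := Real.rpow_le_rpow zero_le_one hX1 (by norm_num)
  have hr1 : (1:ℝ) ≤ (x₁:ℝ)/s := le_trans h6 hXP
  have hsx : s ≤ x₁ := by
    have : (s:ℝ) ≤ x₁ := by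
      have := mul_le_mul_of_nonneg_right hr1 hsR.le
      rwa [one_mul, div_mul_cancel₀ _ hsR.ne'] at this
    exact_mod_cast this
  have hX6 : Xval A B ≤ ((x₁:ℝ)/s)^6 := by
    calc Xval A B = (Xval A B ^ ((1:ℝ)/6))^(6:ℕ) := by
          rw [← Real.rpow_natCast (Xval A B ^ ((1:ℝ)/6)) 6, ← Real.rpow_mul hX0]
          norm_num
      _ ≤ ((x₁:ℝ)/s)^(6:ℕ) := pow_le_pow_left₀ (le_trans zero_le_one h6) hXP 6
  have hr0 : (0:ℝ) ≤ (x₁:ℝ)/s := le_trans zero_le_one hr1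
  have hAr : |(A:ℝ)| ≤ ((x₁:ℝ)/s)^2 := by
    have h3 : |(A:ℝ)|^3 ≤ (((x₁:ℝ)/s)^2)^3 := by
      calc |(A:ℝ)|^3 ≤ Xval A B := le_max_left _ _
        _ ≤ ((x₁:ℝ)/s)^6 := hX6
        _ = (((x₁:ℝ)/s)^2)^3 := by ring
    exact (pow_le_pow_iff_left₀ (abs_nonneg _) (by positivity) (by norm_num)).mp h3
  have hBr : |(B:ℝ)| ≤ ((x₁:ℝ)/s)^3 := by
    have h3 : |(B:ℝ)|^2 ≤ (((x₁:ℝ)/s)^3)^2 := by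
      calc |(B:ℝ)|^2 ≤ Xval A B := le_max_right _ _
        _ ≤ ((x₁:ℝ)/s)^6 := hX6
        _ = (((x₁:ℝ)/s)^3)^2 := by ring
    exact (pow_le_pow_iff_left₀ (abs_nonneg _) (by positivity) (by norm_num)).mp h3
  refine ⟨hsx, ?_, ?_⟩
  · have : |(A:ℝ)| * s^2 ≤ (x₁:ℝ)^2 := by
      have := mul_le_mul_of_nonneg_right hAr (by positivity : (0:ℝ) ≤ (s:ℝ)^2)
      rwa [div_pow, div_mul_cancel₀ _ (by positivity : ((s:ℝ)^2) ≠ 0)] at this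
    have h' : ((|A| * s^2 : ℤ):ℝ) ≤ ((x₁^2 : ℤ):ℝ) := by push_cast; exact this
    exact_mod_cast h'
  · have : |(B:ℝ)| * s^3 ≤ (x₁:ℝ)^3 := by
      have := mul_le_mul_of_nonneg_right hBr (by positivity : (0:ℝ) ≤ (s:ℝ)^3)
      rwa [div_pow, div_mul_cancel₀ _ (by positivity : ((s:ℝ)^3) ≠ 0)] at this
    have h' : ((|B| * s^3 : ℤ):ℝ) ≤ ((x₁^3 : ℤ):ℝ) := by push_cast; exact this
    exact_mod_cast h'

set_option maxHeartbeats 2000000 in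
theorem statement4 (A B : ℤ) (hAB : 4 * A ^ 3 + 27 * B ^ 2 ≠ 0)
    (P Q : (Ecurve A B).Point) (hP : P ≠ 0) (hQ : Q ≠ 0)
    (hXP : Xval A B ^ ((1 : ℝ) / 6) ≤ ((xCoord P : ℚ) : ℝ))
    (hPQ : xCoord P < xCoord Q)
    (x₁ x₂ s : ℤ) (hs : 0 < s)
    (hx₁ : xCoord P = (x₁ : ℚ) / (s : ℚ)) (hx₂ : xCoord Q = (x₂ : ℚ) / (s : ℚ)) :
    P + Q ≠ 0 ∧
    qh (xCoord (P + Q)) ≤ qh (xCoord P) + 2 * qh (xCoord Q) + 3 * Real.log s + 2.9 := by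
  rcases P with _ | @⟨xp, yp, hp⟩
  · exact absurd rfl hP
  rcases Q with _ | @⟨xq, yq, hq⟩
  · exact absurd rfl hQ
  simp only [xCoord] at hXP hPQ hx₁ hx₂
  have hx : xp ≠ xq := ne_of_lt hPQ
  rw [WeierstrassCurve.Affine.Point.add_of_X_ne hx]
  refine ⟨WeierstrassCurve.Affine.Point.some_ne_zero _, ?_⟩
  have hsQ : (s:ℚ) ≠ 0 := by exact_mod_cast hs.ne'
  have hsQ0 : (0:ℚ) < (s:ℚ) := by exact_mod_cast hs
  -- the x-coordinate of the sum
  have hXadd : xCoord (WeierstrassCurve.Affine.Point.some _ _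
      (WeierstrassCurve.Affine.nonsingular_add hp hq fun h => (hx h.1).elim)) =
      ((yp - yq)/(xp - xq))^2 - xp - xq := by
    simp only [xCoord, WeierstrassCurve.Affine.addX,
      WeierstrassCurve.Affine.slope_of_X_ne hx, Ecurve]
    ring
  -- curve equations
  have h1 : yp^2 = xp^3 + (A:ℚ)*xp + B := by
    have := ((Ecurve A B).equation_iff xp yp).mp hp.left
    simp only [Ecurve] at this
    linarith [this]
  have h2 : yq^2 = xq^3 + (A:ℚ)*xq + B := by
    have := ((Ecurve A B).equation_iff xq yq).mp hq.left
    simp only [Ecurve] at this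
    linarith [this]
  -- the real-analytic bounds
  obtain ⟨hsx, hA, hB⟩ := aux_real A B x₁ s hs hAB (by rw [hx₁] at hXP; push_cast at hXP ⊢; exact hXP)
  have h12 : x₁ < x₂ := by
    rw [hx₁, hx₂] at hPQ
    have := mul_lt_mul_of_pos_right hPQ hsQ0
    rw [div_mul_cancel₀ _ hsQ, div_mul_cancel₀ _ hsQ] at this
    exact_mod_cast this
  have hx₁0 : 0 < x₁ := lt_of_lt_of_le hs hsx
  have hx₂0 : 0 < x₂ := lt_trans hx₁0 h12
  have hneQ : (x₁:ℚ) ≠ (x₂:ℚ) := by exact_mod_cast h12.ne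
  -- cleared Weierstrass equations
  have H1 : yp^2 * (s:ℚ)^3 = (x₁:ℚ)^3 + (A:ℚ)*x₁*(s:ℚ)^2 + (B:ℚ)*(s:ℚ)^3 := by
    have h1' := h1
    rw [hx₁] at h1'
    field_simp at h1'
    exact mul_right_cancel₀ hsQ (by linear_combination (s:ℚ) * h1')
  have H2 : yq^2 * (s:ℚ)^3 = (x₂:ℚ)^3 + (A:ℚ)*x₂*(s:ℚ)^2 + (B:ℚ)*(s:ℚ)^3 := by
    have h2' := h2
    rw [hx₂] at h2'
    field_simp at h2'
    exact mul_right_cancel₀ hsQ (by linear_combination (s:ℚ) * h2')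
  -- the product of the y-coordinates is m / s³ for an integer m
  set μ : ℚ := (s:ℚ)^3*(yp*yq) with hμdef
  have hμ2 : μ^2 = ((x₁^3 + A*x₁*s^2 + B*s^3 : ℤ):ℚ) * ((x₂^3 + A*x₂*s^2 + B*s^3 : ℤ):ℚ) := by
    push_cast
    linear_combination (yq^2*(s:ℚ)^3) * H1 + ((x₁:ℚ)^3 + (A:ℚ)*x₁*(s:ℚ)^2 + (B:ℚ)*(s:ℚ)^3) * H2
  have hden : μ.den = 1 := by
    have h := congrArg Rat.den hμ2
    rw [Rat.den_pow, ← Int.cast_mul, Rat.den_intCast] at h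
    exact (pow_eq_one_iff.mp h).resolve_right (by norm_num)
  set m : ℤ := μ.num with hmdef
  have hμm : μ = (m:ℚ) := ((Rat.den_eq_one_iff μ).mp hden).symm
  have hmZ : m^2 = (x₁^3 + A*x₁*s^2 + B*s^3) * (x₂^3 + A*x₂*s^2 + B*s^3) := by
    have : ((m:ℚ))^2 = ((x₁^3 + A*x₁*s^2 + B*s^3 : ℤ):ℚ) * ((x₂^3 + A*x₂*s^2 + B*s^3 : ℤ):ℚ) := by
      rw [← hμm]; exact hμ2
    exact_mod_cast this
  have hf₁0 : 0 ≤ x₁^3 + A*x₁*s^2 + B*s^3 := by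
    have h0 : (0:ℚ) ≤ yp^2 * (s:ℚ)^3 := by positivity
    rw [H1] at h0
    exact_mod_cast h0
  have hf₂0 : 0 ≤ x₂^3 + A*x₂*s^2 + B*s^3 := by
    have h0 : (0:ℚ) ≤ yq^2 * (s:ℚ)^3 := by positivity
    rw [H2] at h0
    exact_mod_cast h0
  have hm' : yp*yq = (m:ℚ)/(s:ℚ)^3 := by
    rw [eq_div_iff (by positivity)]
    linear_combination hμm
  -- the value of the new x-coordinate
  have hval : ((yp - yq)/(xp - xq))^2 - xp - xq =
      ((x₁*x₂*(x₁+x₂) + A*s^2*(x₁+x₂) + 2*B*s^3 - 2*m : ℤ):ℚ) / ((s*(x₂-x₁)^2 : ℤ):ℚ) := by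
    rw [aux_step1 (A:ℚ) (B:ℚ) xp xq yp yq hx h1 h2, hx₁, hx₂]
    exact aux_step2 A B x₁ x₂ s m hsQ hneQ yp yq hm'
  -- the bounds
  obtain ⟨hNb, hDb⟩ := aux_bounds A B x₁ x₂ s m _ _ hs hsx h12 hA hB rfl rfl hf₁0 hf₂0 hmZ
  have hD0 : s*(x₂-x₁)^2 ≠ 0 := by
    have h2 : (0:ℤ) < (x₂-x₁)^2 := pow_pos (sub_pos.mpr h12) 2
    exact (mul_pos hs h2).ne'
  -- assemble the height inequality
  have hxcP : xCoord (WeierstrassCurve.Affine.Point.some _ _ hp) = xp := rfl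
  have hxcQ : xCoord (WeierstrassCurve.Affine.Point.some _ _ hq) = xq := rfl
  rw [hxcP, hxcQ, hXadd, hval, hx₁, hx₂]
  have key := aux_qh_div_le (x₁*x₂*(x₁+x₂) + A*s^2*(x₁+x₂) + 2*B*s^3 - 2*m) (s*(x₂-x₁)^2) hD0
  have hx₁R : (0:ℝ) < (x₁:ℝ) := by exact_mod_cast hx₁0
  have hx₂R : (0:ℝ) < (x₂:ℝ) := by exact_mod_cast hx₂0
  have hsR : (0:ℝ) < (s:ℝ) := by exact_mod_cast hs
  have hmaxle : max |((x₁*x₂*(x₁+x₂) + A*s^2*(x₁+x₂) + 2*B*s^3 - 2*m : ℤ):ℝ)| |((s*(x₂-x₁)^2 : ℤ):ℝ)|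
      ≤ 12*(x₁:ℝ)*(x₂:ℝ)^2 := by
    apply max_le
    · calc |((x₁*x₂*(x₁+x₂) + A*s^2*(x₁+x₂) + 2*B*s^3 - 2*m : ℤ):ℝ)|
          = ((|x₁*x₂*(x₁+x₂) + A*s^2*(x₁+x₂) + 2*B*s^3 - 2*m| : ℤ):ℝ) := by push_cast; ring
        _ ≤ ((12*x₁*x₂^2 : ℤ):ℝ) := by exact_mod_cast hNb
        _ = 12*(x₁:ℝ)*(x₂:ℝ)^2 := by push_cast; ring
    · calc |((s*(x₂-x₁)^2 : ℤ):ℝ)| = ((|s*(x₂-x₁)^2| : ℤ):ℝ) := by push_cast; ring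
        _ ≤ ((12*x₁*x₂^2 : ℤ):ℝ) := by exact_mod_cast hDb
        _ = 12*(x₁:ℝ)*(x₂:ℝ)^2 := by push_cast; ring
  have hmaxpos : (0:ℝ) < max |((x₁*x₂*(x₁+x₂) + A*s^2*(x₁+x₂) + 2*B*s^3 - 2*m : ℤ):ℝ)| |((s*(x₂-x₁)^2 : ℤ):ℝ)| := by
    apply lt_max_of_lt_right
    have : ((s*(x₂-x₁)^2 : ℤ):ℝ) ≠ 0 := by exact_mod_cast hD0
    exact abs_pos.mpr this
  have hlog : Real.log (max |((x₁*x₂*(x₁+x₂) + A*s^2*(x₁+x₂) + 2*B*s^3 - 2*m : ℤ):ℝ)| |((s*(x₂-x₁)^2 : ℤ):ℝ)|)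
      ≤ Real.log 12 + Real.log x₁ + 2*Real.log x₂ := by
    calc _ ≤ Real.log (12*(x₁:ℝ)*(x₂:ℝ)^2) := Real.log_le_log hmaxpos hmaxle
      _ = Real.log 12 + Real.log x₁ + 2*Real.log x₂ := by
        rw [Real.log_mul (by positivity) (by positivity),
          Real.log_mul (by norm_num) hx₁R.ne', Real.log_pow]
        push_cast; ring
  -- lower bounds for the heights of P and Q
  have hr₁ : (1:ℚ) ≤ (x₁:ℚ)/s := by
    rw [le_div_iff₀ hsQ0, one_mul]
    exact_mod_cast hsx
  have hr₂ : (1:ℚ) ≤ (x₂:ℚ)/s := by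
    rw [le_div_iff₀ hsQ0, one_mul]
    exact_mod_cast le_of_lt (lt_of_le_of_lt hsx h12)
  have lb1 : Real.log ((x₁:ℝ)) - Real.log ((s:ℝ)) ≤ qh ((x₁:ℚ)/(s:ℚ)) := by
    have h := aux_log_le_qh _ hr₁
    rw [← Real.log_div hx₁R.ne' hsR.ne']
    convert h using 2
    push_cast; ring
  have lb2 : Real.log ((x₂:ℝ)) - Real.log ((s:ℝ)) ≤ qh ((x₂:ℚ)/(s:ℚ)) := by
    have h := aux_log_le_qh _ hr₂
    rw [← Real.log_div hx₂R.ne' hsR.ne']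
    convert h using 2
    push_cast; ring
  linarith [key, hlog, lb1, lb2, aux_log12]
end

section
/- Let P, Q be affine points of E(ℚ) with X^{1/6} ≤ x(P) < x(Q), and suppose x(P) = x₁/s and x(Q) = x₂/s where x₁, x₂ are integers and s is a positive integer. Then P + Q is an affine point and h(x(P+Q)) ≤ h(x₁) + 2·h(x₂) + log 18. -/
open scoped TensorProduct

private lemma statement5_aux1 (A B : ℤ) (hAB : 4 * A ^ 3 + 27 * B ^ 2 ≠ 0) (u : ℚ)
    (hXP : Xval A B ^ ((1 : ℝ) / 6) ≤ (u:ℝ)) :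
    (1 ≤ u) ∧ |(A:ℚ)| ≤ u^2 ∧ |(B:ℚ)| ≤ u^3 := by
  have hX1 : (1:ℝ) ≤ Xval A B := by
    rcases eq_or_ne A 0 with hA | hA
    · have hB : B ≠ 0 := by rintro rfl; simp [hA] at hAB
      have h1 : (1:ℝ) ≤ |(B:ℝ)| := by exact_mod_cast Int.one_le_abs hB
      have : (1:ℝ) ≤ |(B:ℝ)|^2 := one_le_pow₀ h1
      exact le_trans this (le_max_right _ _)
    · have h1 : (1:ℝ) ≤ |(A:ℝ)| := by exact_mod_cast Int.one_le_abs hA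
      have : (1:ℝ) ≤ |(A:ℝ)|^3 := one_le_pow₀ h1
      exact le_trans this (le_max_left _ _)
  have hXpos : (0:ℝ) ≤ Xval A B := by linarith
  have h1r : (1:ℝ) ≤ Xval A B ^ ((1:ℝ)/6) := Real.one_le_rpow hX1 (by norm_num)
  have h1u : (1:ℚ) ≤ u := by exact_mod_cast le_trans h1r hXP
  have hpow : (Xval A B ^ ((1:ℝ)/6)) ^ (6:ℕ) = Xval A B := by
    rw [← Real.rpow_natCast (Xval A B ^ ((1:ℝ)/6)) 6, ← Real.rpow_mul hXpos]; norm_num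
  have hX6 : Xval A B ≤ (u:ℝ)^6 := by
    rw [← hpow]; exact pow_le_pow_left₀ (by linarith) hXP 6
  have hA : |(A:ℚ)| ≤ u^2 := by
    have h3 : |(A:ℝ)|^3 ≤ ((u:ℝ)^2)^3 :=
      le_trans (le_trans (le_max_left _ _) hX6) (le_of_eq (by ring))
    have h4 := (pow_le_pow_iff_left₀ (abs_nonneg _) (by positivity) (by norm_num)).mp h3
    have : ((|(A:ℚ)| : ℚ) : ℝ) ≤ ((u^2 : ℚ) : ℝ) := by push_cast; exact h4
    exact_mod_cast this
  have hB : |(B:ℚ)| ≤ u^3 := by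
    have h3 : |(B:ℝ)|^2 ≤ ((u:ℝ)^3)^2 :=
      le_trans (le_trans (le_max_right _ _) hX6) (le_of_eq (by ring))
    have h4 := (pow_le_pow_iff_left₀ (abs_nonneg _) (by positivity) (by norm_num)).mp h3
    have : ((|(B:ℚ)| : ℚ) : ℝ) ≤ ((u^3 : ℚ) : ℝ) := by push_cast; exact h4
    exact_mod_cast this
  exact ⟨h1u, hA, hB⟩

private lemma statement5_aux2 (A B x₁ x₂ s w : ℤ) (u v yP yQ : ℚ) (hs : (s:ℚ) ≠ 0)
    (eP : yP ^ 2 = u ^ 3 + (A:ℚ) * u + (B:ℚ)) (eQ : yQ ^ 2 = v ^ 3 + (A:ℚ) * v + (B:ℚ))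
    (huv : u ≠ v) (hu : (x₁:ℚ) = u * s) (hv : (x₂:ℚ) = v * s)
    (hw : (w:ℚ) = (s:ℚ)^3 * (yP * yQ)) :
    ((yP - yQ)/(u - v))^2 - u - v =
      (((x₁*x₂ + A*s^2)*(x₁+x₂) + 2*B*s^3 - 2*w : ℤ) : ℚ) / ((s*(x₂-x₁)^2 : ℤ) : ℚ) := by
  have hne : u - v ≠ 0 := sub_ne_zero.mpr huv
  have hd : ((s*(x₂-x₁)^2 : ℤ) : ℚ) = (s:ℚ)^3 * (u-v)^2 := by push_cast [hu, hv]; ring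
  have hd0 : (s:ℚ)^3 * (u-v)^2 ≠ 0 := by positivity
  have l1 : ((yP - yQ)/(u - v))^2 - u - v = ((yP-yQ)^2 - (u+v)*(u-v)^2)/(u-v)^2 := by
    field_simp; ring
  have l2 : (yP-yQ)^2 - (u+v)*(u-v)^2 = (u*v+(A:ℚ))*(u+v) + 2*B - 2*(yP*yQ) := by
    linear_combination eP + eQ
  rw [l1, l2, hd, div_eq_div_iff (pow_ne_zero 2 hne) hd0]
  push_cast [hu, hv, hw]
  ring

private lemma statement5_aux3 (A B x₁ x₂ s w : ℤ) (u v yP yQ : ℚ) (hs : (0:ℚ) < s)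
    (eP : yP ^ 2 = u ^ 3 + (A:ℚ) * u + (B:ℚ)) (eQ : yQ ^ 2 = v ^ 3 + (A:ℚ) * v + (B:ℚ))
    (huv : u < v) (hu : (x₁:ℚ) = u * s) (hv : (x₂:ℚ) = v * s)
    (hw : (w:ℚ) = (s:ℚ)^3 * (yP * yQ))
    (h1u : 1 ≤ u) (hA : |(A:ℚ)| ≤ u^2) (hB : |(B:ℚ)| ≤ u^3) :
    |(((x₁*x₂ + A*s^2)*(x₁+x₂) + 2*B*s^3 - 2*w : ℤ) : ℚ)| ≤ 12*x₁*x₂^2 ∧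
    ((s*(x₂-x₁)^2 : ℤ) : ℚ) ≤ x₁*x₂^2 ∧ (1:ℚ) ≤ x₁ ∧ (x₁:ℚ) < x₂ := by
  have hs1 : (1:ℚ) ≤ s := by exact_mod_cast hs
  have h1x₁ : (1:ℚ) ≤ (x₁:ℚ) := by rw [hu]; nlinarith
  have hsx₁ : (s:ℚ) ≤ x₁ := by rw [hu]; nlinarith
  have hx₁x₂ : (x₁:ℚ) < x₂ := by
    rw [hu, hv]; exact mul_lt_mul_of_pos_right huv hs
  have hX1pos : (0:ℚ) < x₁ := lt_of_lt_of_le zero_lt_one h1x₁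
  have hX2pos : (0:ℚ) < x₂ := lt_trans hX1pos hx₁x₂
  have hApair := abs_le.mp hA
  have hBpair := abs_le.mp hB
  have hx12 : ((x₁:ℚ))^2 = u^2*s^2 := by rw [hu]; ring
  have hx13 : ((x₁:ℚ))^3 = u^3*s^3 := by rw [hu]; ring
  have hs2 : (0:ℚ) < s^2 := by positivity
  have hs3 : (0:ℚ) < s^3 := by positivity
  have hAs : -((x₁:ℚ)^2) ≤ (A:ℚ)*s^2 ∧ (A:ℚ)*s^2 ≤ (x₁:ℚ)^2 := by
    have h1 := mul_le_mul_of_nonneg_right hApair.1 hs2.le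
    have h2 := mul_le_mul_of_nonneg_right hApair.2 hs2.le
    exact ⟨by linarith [hx12.ge], by linarith [hx12.le]⟩
  have hBs : -((x₁:ℚ)^3) ≤ (B:ℚ)*s^3 ∧ (B:ℚ)*s^3 ≤ (x₁:ℚ)^3 := by
    have h1 := mul_le_mul_of_nonneg_right hBpair.1 hs3.le
    have h2 := mul_le_mul_of_nonneg_right hBpair.2 hs3.le
    exact ⟨by linarith [hx13.ge], by linarith [hx13.le]⟩
  have hsq : (x₁:ℚ)^2 ≤ (x₂:ℚ)^2 := pow_le_pow_left₀ hX1pos.le hx₁x₂.le 2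
  have hcube : (x₁:ℚ)^3 ≤ (x₁:ℚ)*x₂^2 := by
    have := mul_le_mul_of_nonneg_left hsq hX1pos.le
    linarith [this]
  have hm1 : (x₁:ℚ)^2*x₂ ≤ (x₁:ℚ)*x₂^2 := by
    have := mul_le_mul_of_nonneg_right (mul_le_mul_of_nonneg_left hx₁x₂.le hX1pos.le) hX2pos.le
    linarith [this]
  have hf1 : (s:ℚ)^3 * yP^2 = (x₁:ℚ)^3 + A*s^2*x₁ + B*s^3 := by rw [eP, hu]; ring
  have hf2 : (s:ℚ)^3 * yQ^2 = (x₂:ℚ)^3 + A*s^2*x₂ + B*s^3 := by rw [eQ, hv]; ring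
  have hw2 : (w:ℚ)^2 = ((x₁:ℚ)^3 + A*s^2*x₁ + B*s^3) * ((x₂:ℚ)^3 + A*s^2*x₂ + B*s^3) := by
    rw [← hf1, ← hf2, hw]; ring
  have hAx1 : -((x₁:ℚ)^3) ≤ (A:ℚ)*s^2*x₁ ∧ (A:ℚ)*s^2*x₁ ≤ (x₁:ℚ)^3 := by
    have h1 := mul_le_mul_of_nonneg_right hAs.1 hX1pos.le
    have h2 := mul_le_mul_of_nonneg_right hAs.2 hX1pos.le
    exact ⟨by linarith [h1], by linarith [h2]⟩
  have hAx2 : -((x₁:ℚ)^2*x₂) ≤ (A:ℚ)*s^2*x₂ ∧ (A:ℚ)*s^2*x₂ ≤ (x₁:ℚ)^2*x₂ := by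
    have h1 := mul_le_mul_of_nonneg_right hAs.1 hX2pos.le
    have h2 := mul_le_mul_of_nonneg_right hAs.2 hX2pos.le
    exact ⟨by linarith [h1], by linarith [h2]⟩
  have hf1b : ((x₁:ℚ)^3 + A*s^2*x₁ + B*s^3) ≤ 3*(x₁:ℚ)^3 ∧
      (0:ℚ) ≤ ((x₁:ℚ)^3 + A*s^2*x₁ + B*s^3) :=
    ⟨by linarith [hAx1.2, hBs.2], by rw [← hf1]; positivity⟩
  have hx23 : (x₁:ℚ)^3 ≤ (x₂:ℚ)^3 := pow_le_pow_left₀ hX1pos.le hx₁x₂.le 3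
  have hm2 : (x₁:ℚ)^2*x₂ ≤ (x₂:ℚ)^3 := by
    have := mul_le_mul_of_nonneg_right hsq hX2pos.le
    linarith [this]
  have hf2b : ((x₂:ℚ)^3 + A*s^2*x₂ + B*s^3) ≤ 3*(x₂:ℚ)^3 ∧
      (0:ℚ) ≤ ((x₂:ℚ)^3 + A*s^2*x₂ + B*s^3) :=
    ⟨by linarith [hAx2.2, hBs.2, hm2, hx23], by rw [← hf2]; positivity⟩
  have hwsq : (w:ℚ)^2 ≤ (3*(x₁:ℚ)*x₂^2)^2 := by
    rw [hw2]
    have h9 := mul_le_mul hf1b.1 hf2b.1 hf2b.2 (by positivity : (0:ℚ) ≤ 3*(x₁:ℚ)^3)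
    have h10 : (x₁:ℚ)^3*(x₂:ℚ)^3 ≤ (x₁:ℚ)^2*(x₂:ℚ)^4 := by
      have h := mul_le_mul_of_nonneg_left hx₁x₂.le
        (by positivity : (0:ℚ) ≤ (x₁:ℚ)^2*(x₂:ℚ)^3)
      linarith [h]
    linarith [h9, h10]
  have hwb := abs_le_of_sq_le_sq' hwsq (by positivity)
  refine ⟨?_, ?_, h1x₁, hx₁x₂⟩
  · push_cast
    rw [abs_le]
    constructor
    · linarith [hm1, hAx1.1, hAx2.1, hBs.1, hwb.2, hcube, mul_pos hX1pos (mul_pos hX2pos hX2pos)]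
    · linarith [hm1, hAx1.2, hAx2.2, hBs.2, hwb.1, hcube, mul_pos hX1pos (mul_pos hX2pos hX2pos)]
  · push_cast
    have hsq2 : ((x₂:ℚ)-x₁)^2 ≤ (x₂:ℚ)^2 := sq_le_sq' (by linarith) (by linarith)
    calc (s:ℚ)*((x₂:ℚ)-x₁)^2 ≤ (x₁:ℚ)*(x₂:ℚ)^2 :=
          mul_le_mul hsx₁ hsq2 (sq_nonneg _) hX1pos.le
      _ = (x₁:ℚ)*x₂^2 := by ring

private lemma statement5_aux4 (N D x₁ x₂ : ℤ) (r : ℚ) (hD : 0 < D) (hr : r = (N:ℚ)/(D:ℚ))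
    (hN : |(N:ℚ)| ≤ 12*x₁*x₂^2) (hDb : ((D:ℤ):ℚ) ≤ (x₁:ℚ)*x₂^2)
    (h1x₁ : (1:ℚ) ≤ (x₁:ℚ)) (hx₁x₂ : (x₁:ℚ) < (x₂:ℚ)) :
    qh r ≤ qh (x₁:ℚ) + 2 * qh (x₂:ℚ) + Real.log 18 := by
  have hDQ : (0:ℚ) < (D:ℚ) := by exact_mod_cast hD
  have hden : (r.den : ℤ) ≤ D := by
    rw [hr, ← Rat.divInt_eq_div]; exact Int.le_of_dvd hD (Rat.den_dvd N D)
  have hdenpos : (0:ℚ) < (r.den:ℚ) := by exact_mod_cast r.den_pos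
  have hnumden : ((r.num:ℚ)) = r * r.den := by
    have hd0 : ((r.den:ℚ)) ≠ 0 := hdenpos.ne'
    calc (r.num:ℚ) = ((r.num:ℚ)/r.den) * r.den := (div_mul_cancel₀ _ hd0).symm
      _ = r * r.den := by rw [Rat.num_div_den r]
  have hnum : (|r.num| : ℚ) ≤ |(N:ℚ)| := by
    have h1 : (|r.num| : ℚ) = |r| * r.den := by
      push_cast
      rw [hnumden, abs_mul, abs_of_pos hdenpos]
    have h2 : |r| = |(N:ℚ)| / (D:ℚ) := by rw [hr, abs_div, abs_of_pos hDQ]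
    rw [h1, h2]
    calc |(N:ℚ)| / (D:ℚ) * r.den ≤ |(N:ℚ)| / (D:ℚ) * (D:ℚ) := by
          apply mul_le_mul_of_nonneg_left _ (by positivity)
          exact_mod_cast hden
      _ = |(N:ℚ)| := by field_simp
  have hx₁R : (1:ℝ) ≤ (x₁:ℝ) := by exact_mod_cast h1x₁
  have hx₂R : (1:ℝ) < (x₂:ℝ) := by
    have : (1:ℚ) < (x₂:ℚ) := lt_of_le_of_lt h1x₁ hx₁x₂
    exact_mod_cast this
  have hbound : max (|r.num| : ℝ) (r.den : ℝ) ≤ 12*(x₁:ℝ)*(x₂:ℝ)^2 := by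
    have hNR : (|(N:ℤ)| : ℝ) ≤ 12*(x₁:ℝ)*(x₂:ℝ)^2 := by
      have h0 : (|(N:ℚ)| : ℚ) ≤ 12*(x₁:ℚ)*(x₂:ℚ)^2 := hN
      have := (Rat.cast_le (K := ℝ)).mpr h0
      push_cast at this ⊢; exact this
    refine max_le ?_ ?_
    · have h2 : (|r.num| : ℚ) ≤ (|N| : ℤ) := by rwa [Int.cast_abs]
      have h3 := (Rat.cast_le (K := ℝ)).mpr h2
      push_cast at h3 ⊢; linarith
    · have h4 : ((r.den:ℤ):ℝ) ≤ (D:ℝ) := by exact_mod_cast hden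
      have h5 : (D:ℝ) ≤ (x₁:ℝ)*(x₂:ℝ)^2 := by
        have := (Rat.cast_le (K := ℝ)).mpr hDb; push_cast at this; exact this
      push_cast at h4
      nlinarith [h4, h5, hx₁R, hx₂R]
  have hq1 : qh (x₁:ℚ) = Real.log (x₁:ℝ) := by
    unfold qh
    rw [Rat.num_intCast, Rat.den_intCast]
    push_cast
    rw [abs_of_nonneg (by linarith : (0:ℝ) ≤ (x₁:ℝ)), max_eq_left hx₁R]
  have hq2 : qh (x₂:ℚ) = Real.log (x₂:ℝ) := by
    unfold qh
    rw [Rat.num_intCast, Rat.den_intCast]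
    push_cast
    rw [abs_of_nonneg (by linarith : (0:ℝ) ≤ (x₂:ℝ)), max_eq_left hx₂R.le]
  rw [hq1, hq2]
  unfold qh
  have hmaxpos : (0:ℝ) < max (|r.num| : ℝ) (r.den : ℝ) :=
    lt_of_lt_of_le (by exact_mod_cast r.den_pos) (le_max_right _ _)
  calc Real.log (max (|r.num| : ℝ) (r.den : ℝ)) ≤ Real.log (12*(x₁:ℝ)*(x₂:ℝ)^2) :=
        Real.log_le_log hmaxpos hbound
    _ = Real.log 12 + Real.log (x₁:ℝ) + 2 * Real.log (x₂:ℝ) := by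
        rw [Real.log_mul (by positivity) (by positivity),
          Real.log_mul (by norm_num) (by positivity), Real.log_pow]
        push_cast; ring
    _ ≤ Real.log (x₁:ℝ) + 2 * Real.log (x₂:ℝ) + Real.log 18 := by
        have : Real.log 12 ≤ Real.log 18 := Real.log_le_log (by norm_num) (by norm_num)
        linarith

theorem statement5 (A B : ℤ) (hAB : 4 * A ^ 3 + 27 * B ^ 2 ≠ 0)
    (P Q : (Ecurve A B).Point) (hP : P ≠ 0) (hQ : Q ≠ 0)
    (hXP : Xval A B ^ ((1 : ℝ) / 6) ≤ ((xCoord P : ℚ) : ℝ))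
    (hPQ : xCoord P < xCoord Q)
    (x₁ x₂ s : ℤ) (hs : 0 < s)
    (hx₁ : xCoord P = (x₁ : ℚ) / (s : ℚ)) (hx₂ : xCoord Q = (x₂ : ℚ) / (s : ℚ)) :
    P + Q ≠ 0 ∧
    qh (xCoord (P + Q)) ≤ qh (x₁ : ℚ) + 2 * qh (x₂ : ℚ) + Real.log 18 := by
  rcases P with _ | @⟨u, yP, hPns⟩
  · exact absurd rfl hP
  rcases Q with _ | @⟨v, yQ, hQns⟩
  · exact absurd rfl hQ
  have hPQx : u ≠ v := ne_of_lt hPQ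
  have huv : u < v := hPQ
  rw [WeierstrassCurve.Affine.Point.add_of_X_ne hPQx]
  refine ⟨WeierstrassCurve.Affine.Point.some_ne_zero _, ?_⟩
  have eP : yP ^ 2 = u ^ 3 + (A:ℚ) * u + (B:ℚ) := by
    have := ((WeierstrassCurve.Affine.equation_iff u yP).mp hPns.1)
    simpa [Ecurve] using this
  have eQ : yQ ^ 2 = v ^ 3 + (A:ℚ) * v + (B:ℚ) := by
    have := ((WeierstrassCurve.Affine.equation_iff v yQ).mp hQns.1)
    simpa [Ecurve] using this
  have hx3 : xCoord (WeierstrassCurve.Affine.Point.some _ _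
      (WeierstrassCurve.Affine.nonsingular_add hPns hQns fun h => (hPQx h.1).elim)) =
      ((yP - yQ)/(u - v))^2 - u - v := by
    show (Ecurve A B).addX u v ((Ecurve A B).slope u v yP yQ) = _
    rw [WeierstrassCurve.Affine.slope_of_X_ne hPQx, WeierstrassCurve.Affine.addX]
    simp [Ecurve]
  have hsQ : ((s:ℚ)) ≠ 0 := by positivity
  have hsQpos : (0:ℚ) < s := by exact_mod_cast hs
  have hxu : u = (x₁:ℚ)/s := hx₁
  have hxv : v = (x₂:ℚ)/s := hx₂
  have hu : (x₁:ℚ) = u * s := by rw [hxu, div_mul_cancel₀ _ hsQ]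
  have hv : (x₂:ℚ) = v * s := by rw [hxv, div_mul_cancel₀ _ hsQ]
  -- the integer w = s³ yP yQ
  have hf1 : (s:ℚ)^3 * yP^2 = (((x₁^3 + A*s^2*x₁ + B*s^3 : ℤ)):ℚ) := by
    push_cast; rw [eP, hu]; ring
  have hf2 : (s:ℚ)^3 * yQ^2 = (((x₂^3 + A*s^2*x₂ + B*s^3 : ℤ)):ℚ) := by
    push_cast; rw [eQ, hv]; ring
  set t : ℚ := (s:ℚ)^3 * (yP * yQ) with ht
  have ht2 : t * t = (((x₁^3 + A*s^2*x₁ + B*s^3) * (x₂^3 + A*s^2*x₂ + B*s^3) : ℤ) : ℚ) := by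
    rw [Int.cast_mul, ← hf1, ← hf2, ht]; ring
  have htden : t.den = 1 := by
    have h2 := Rat.mul_self_den t
    rw [ht2, Rat.den_intCast] at h2
    have := Nat.eq_one_of_mul_eq_one_left h2.symm
    exact this
  set w : ℤ := t.num with hwdef
  have hw : (w:ℚ) = (s:ℚ)^3 * (yP * yQ) := by
    rw [hwdef, Rat.coe_int_num_of_den_eq_one htden]
  obtain ⟨h1u, hAb, hBb⟩ := statement5_aux1 A B hAB u hXP
  have hval := statement5_aux2 A B x₁ x₂ s w u v yP yQ hsQ eP eQ hPQx hu hv hw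
  obtain ⟨hNb, hDb, h1x₁, hx₁x₂⟩ :=
    statement5_aux3 A B x₁ x₂ s w u v yP yQ hsQpos eP eQ huv hu hv hw h1u hAb hBb
  have hDpos : 0 < s*(x₂-x₁)^2 := by
    have : x₁ < x₂ := by exact_mod_cast hx₁x₂
    have hx0 : x₂ - x₁ ≠ 0 := by omega
    positivity
  refine statement5_aux4 ((x₁*x₂ + A*s^2)*(x₁+x₂) + 2*B*s^3 - 2*w) (s*(x₂-x₁)^2) x₁ x₂
    _ hDpos ?_ ?_ hDb h1x₁ hx₁x₂
  · rw [hx3, hval]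
  · push_cast at hNb ⊢; exact hNb
end

section
/- Let P, Q be affine points of E(ℚ) with |x(P)| ≤ 2·X^{1/6} and |x(Q)| ≤ 2·X^{1/6}, and suppose x(P) = x₁/s and x(Q) = x₂/s where x₁, x₂ are integers with x₁ ≠ x₂ and s is a positive integer. Then P + Q is an affine point and h(P+Q) ≤ 3·log s + (1/2)·log X + 3.9. -/
open scoped TensorProduct

lemma rat_int_of_sq (r : ℚ) (m : ℤ) (h : r * r = (m : ℚ)) : ∃ k : ℤ, r = (k : ℚ) := by
  have hd : r.den * r.den = 1 := by
    have h1 := Rat.mul_self_den r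
    rw [h] at h1
    simpa using h1.symm
  have hone : r.den = 1 := by nlinarith
  exact ⟨r.num, ((Rat.den_eq_one_iff r).mp hone).symm⟩

lemma qh_le_of_eq_div (r : ℚ) (N D : ℤ) (hD : 0 < D) (h : r = (N : ℚ) / (D : ℚ))
    (C : ℝ) (hN : |(N : ℝ)| ≤ C) (hDC : (D : ℝ) ≤ C) :
    qh r ≤ Real.log C := by
  have hnum : r.num ∣ N := by
    rw [h, ← Rat.divInt_eq_div]; exact Rat.num_dvd N hD.ne'
  have hden : (r.den : ℤ) ∣ D := by
    rw [h, ← Rat.divInt_eq_div]; exact Rat.den_dvd N D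
  have h1 : |(r.num : ℝ)| ≤ C := by
    rcases eq_or_ne N 0 with h0 | h0
    · have hr0 : r = 0 := by simp [h, h0]
      rw [hr0]
      simpa using le_trans (by exact_mod_cast hD.le : (0:ℝ) ≤ (D:ℝ)) hDC
    · have h2 : |r.num| ≤ |N| := Int.le_of_dvd (abs_pos.mpr h0) ((dvd_abs _ _).mpr ((abs_dvd _ _).mpr hnum))
      calc |(r.num : ℝ)| = ((|r.num| : ℤ) : ℝ) := by push_cast; ring
        _ ≤ ((|N| : ℤ) : ℝ) := by exact_mod_cast h2
        _ = |(N : ℝ)| := by push_cast; ring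
        _ ≤ C := hN
  have h2 : (r.den : ℝ) ≤ C := by
    have h3 : (r.den : ℤ) ≤ D := Int.le_of_dvd hD hden
    calc (r.den : ℝ) ≤ (D : ℝ) := by exact_mod_cast h3
      _ ≤ C := hDC
  have hpos : (0:ℝ) < max (|(r.num:ℝ)|) (r.den : ℝ) := by
    have : (0:ℝ) < (r.den : ℝ) := by exact_mod_cast r.pos
    exact lt_max_of_lt_right this
  have : max (|(r.num:ℝ)|) ((r.den:ℝ)) ≤ C := max_le h1 h2
  calc qh r = Real.log (max (|(r.num:ℝ)|) (r.den : ℝ)) := by rw [qh]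
    _ ≤ Real.log C := Real.log_le_log hpos this

set_option maxHeartbeats 1000000 in
theorem statement8 (A B : ℤ) (hAB : 4 * A ^ 3 + 27 * B ^ 2 ≠ 0)
    (P Q : (Ecurve A B).Point) (hP : P ≠ 0) (hQ : Q ≠ 0)
    (hXP : |((xCoord P : ℚ) : ℝ)| ≤ 2 * Xval A B ^ ((1 : ℝ) / 6))
    (hXQ : |((xCoord Q : ℚ) : ℝ)| ≤ 2 * Xval A B ^ ((1 : ℝ) / 6))
    (x₁ x₂ s : ℤ) (hs : 0 < s) (hne : x₁ ≠ x₂)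
    (hx₁ : xCoord P = (x₁ : ℚ) / (s : ℚ)) (hx₂ : xCoord Q = (x₂ : ℚ) / (s : ℚ)) :
    P + Q ≠ 0 ∧
    qh (xCoord (P + Q)) ≤ 3 * Real.log s + (1 / 2) * Real.log (Xval A B) + 3.9 := by
  -- basic positivity
  have hXval1 : (1:ℝ) ≤ Xval A B := by
    rcases eq_or_ne A 0 with hA0 | hA0
    · have hB0 : B ≠ 0 := by intro h; apply hAB; rw [hA0, h]; ring
      have h1 : (1:ℝ) ≤ |(B:ℝ)| := by exact_mod_cast Int.one_le_abs hB0
      refine le_trans ?_ (le_max_right _ _)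
      exact one_le_pow₀ h1
    · have h1 : (1:ℝ) ≤ |(A:ℝ)| := by exact_mod_cast Int.one_le_abs hA0
      refine le_trans ?_ (le_max_left _ _)
      exact one_le_pow₀ h1
  have hX0 : (0:ℝ) < Xval A B := lt_of_lt_of_le one_pos hXval1
  set t : ℝ := Xval A B ^ ((1:ℝ)/6) with ht
  have ht0 : 0 < t := Real.rpow_pos_of_pos hX0 _
  have ht1 : (1:ℝ) ≤ t := by
    rw [ht]
    calc (1:ℝ) = (1:ℝ) ^ ((1:ℝ)/6) := (Real.one_rpow _).symm
      _ ≤ Xval A B ^ ((1:ℝ)/6) := Real.rpow_le_rpow zero_le_one hXval1 (by norm_num)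
  have ht6 : t ^ 6 = Xval A B := by
    rw [ht, ← Real.rpow_natCast (Xval A B ^ ((1:ℝ)/6)) 6, ← Real.rpow_mul hX0.le]
    norm_num
  have hA : |(A:ℝ)| ≤ t ^ 2 := by
    have h1 : |(A:ℝ)| ^ 3 ≤ Xval A B := le_max_left _ _
    have h2 : |(A:ℝ)| ^ 3 ≤ (t ^ 2) ^ 3 := by
      calc |(A:ℝ)| ^ 3 ≤ Xval A B := h1
        _ = (t ^ 2) ^ 3 := by rw [← ht6]; ring
    exact (pow_le_pow_iff_left₀ (abs_nonneg _) (by positivity) (by norm_num)).mp h2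
  have hB : |(B:ℝ)| ≤ t ^ 3 := by
    have h1 : |(B:ℝ)| ^ 2 ≤ Xval A B := le_max_right _ _
    have h2 : |(B:ℝ)| ^ 2 ≤ (t ^ 3) ^ 2 := by
      calc |(B:ℝ)| ^ 2 ≤ Xval A B := h1
        _ = (t ^ 3) ^ 2 := by rw [← ht6]; ring
    exact (pow_le_pow_iff_left₀ (abs_nonneg _) (by positivity) (by norm_num)).mp h2
  have hs0 : (s:ℚ) ≠ 0 := by exact_mod_cast hs.ne'
  have hsR : (0:ℝ) < (s:ℝ) := by exact_mod_cast hs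
  -- destruct the points
  rcases P with _ | @⟨xP, yP, hPn⟩
  · exact absurd WeierstrassCurve.Affine.Point.zero_def hP
  rcases Q with _ | @⟨xQ, yQ, hQn⟩
  · exact absurd WeierstrassCurve.Affine.Point.zero_def hQ
  simp only [xCoord] at hx₁ hx₂ hXP hXQ
  have eP : yP ^ 2 = xP ^ 3 + (A:ℚ) * xP + (B:ℚ) := by
    have h := hPn.left
    rw [WeierstrassCurve.Affine.equation_iff] at h
    simpa [Ecurve] using h
  have eQ : yQ ^ 2 = xQ ^ 3 + (A:ℚ) * xQ + (B:ℚ) := by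
    have h := hQn.left
    rw [WeierstrassCurve.Affine.equation_iff] at h
    simpa [Ecurve] using h
  have hx12 : (x₁:ℚ) - x₂ ≠ 0 := by
    intro h; apply hne; exact_mod_cast sub_eq_zero.mp h
  have hxq : xP ≠ xQ := by
    rw [hx₁, hx₂]
    intro h
    apply hne
    field_simp at h
    exact_mod_cast h
  have hadd : (WeierstrassCurve.Affine.Point.some _ _ hPn) + (WeierstrassCurve.Affine.Point.some _ _ hQn)
      = WeierstrassCurve.Affine.Point.some
        _ _ (WeierstrassCurve.Affine.nonsingular_add hPn hQn fun h => (hxq h.left).elim) :=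
    WeierstrassCurve.Affine.Point.add_of_X_ne hxq
  refine ⟨by rw [hadd]; exact WeierstrassCurve.Affine.Point.some_ne_zero _, ?_⟩
  have hxadd : xCoord ((WeierstrassCurve.Affine.Point.some _ _ hPn)
      + (WeierstrassCurve.Affine.Point.some _ _ hQn))
      = ((yP - yQ)/(xP - xQ)) ^ 2 - xP - xQ := by
    rw [hadd]
    simp only [xCoord, WeierstrassCurve.Affine.addX,
      WeierstrassCurve.Affine.slope_of_X_ne hxq, Ecurve]
    ring
  -- the integer w with s³ yP yQ = w
  have hm₁ : (s:ℚ) ^ 3 * (xP ^ 3 + (A:ℚ) * xP + (B:ℚ))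
      = ((x₁ ^ 3 + A * s ^ 2 * x₁ + B * s ^ 3 : ℤ) : ℚ) := by
    rw [hx₁]; push_cast; field_simp
  have hm₂ : (s:ℚ) ^ 3 * (xQ ^ 3 + (A:ℚ) * xQ + (B:ℚ))
      = ((x₂ ^ 3 + A * s ^ 2 * x₂ + B * s ^ 3 : ℤ) : ℚ) := by
    rw [hx₂]; push_cast; field_simp
  set m₁ : ℤ := x₁ ^ 3 + A * s ^ 2 * x₁ + B * s ^ 3 with hm1def
  set m₂ : ℤ := x₂ ^ 3 + A * s ^ 2 * x₂ + B * s ^ 3 with hm2def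
  have hsq : ((s:ℚ) ^ 3 * yP * yQ) * ((s:ℚ) ^ 3 * yP * yQ) = ((m₁ * m₂ : ℤ) : ℚ) := by
    have : ((s:ℚ) ^ 3 * yP * yQ) * ((s:ℚ) ^ 3 * yP * yQ)
        = ((s:ℚ) ^ 3 * (yP ^ 2)) * ((s:ℚ) ^ 3 * (yQ ^ 2)) := by ring
    rw [this, eP, eQ, hm₁, hm₂]
    push_cast
    ring
  obtain ⟨w, hw⟩ := rat_int_of_sq _ _ hsq
  have hw2 : w ^ 2 = m₁ * m₂ := by
    have h2 : ((w:ℚ)) * ((w:ℚ)) = ((m₁ * m₂ : ℤ) : ℚ) := by rw [← hw]; exact hsq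
    have h3 : ((w * w : ℤ) : ℚ) = ((m₁ * m₂ : ℤ) : ℚ) := by push_cast at h2 ⊢; exact h2
    have h4 := Rat.intCast_injective h3
    linear_combination h4
  set N : ℤ := (x₁ * x₂ + A * s ^ 2) * (x₁ + x₂) + 2 * B * s ^ 3 - 2 * w with hNdef
  set D : ℤ := s * (x₁ - x₂) ^ 2 with hDdef
  have hD : 0 < D := by
    apply mul_pos hs
    have : x₁ - x₂ ≠ 0 := sub_ne_zero.mpr hne
    positivity
  have eP2 : (s:ℚ) ^ 3 * yP ^ 2 = (x₁:ℚ) ^ 3 + A * s ^ 2 * x₁ + B * s ^ 3 := by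
    rw [eP, hm₁, hm1def]; push_cast; ring
  have eQ2 : (s:ℚ) ^ 3 * yQ ^ 2 = (x₂:ℚ) ^ 3 + A * s ^ 2 * x₂ + B * s ^ 3 := by
    rw [eQ, hm₂, hm2def]; push_cast; ring
  have key : ((yP - yQ)/(xP - xQ)) ^ 2 - xP - xQ = (N:ℚ) / (D:ℚ) := by
    have hDq : (D:ℚ) ≠ 0 := by exact_mod_cast hD.ne'
    rw [eq_div_iff hDq, hx₁, hx₂, hDdef, hNdef]
    push_cast at eP2 eQ2 ⊢
    field_simp
    linear_combination eP2 + eQ2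
      - 2*hw
  -- now the height bound
  have hx1b : |(x₁:ℝ)| ≤ 2 * s * t := by
    have h0 : ((xP : ℚ) : ℝ) = (x₁:ℝ) / (s:ℝ) := by rw [hx₁]; push_cast; ring
    rw [h0, abs_div, abs_of_pos hsR, div_le_iff₀ hsR] at hXP
    calc |(x₁:ℝ)| ≤ 2 * t * s := hXP
      _ = 2 * s * t := by ring
  have hx2b : |(x₂:ℝ)| ≤ 2 * s * t := by
    have h0 : ((xQ : ℚ) : ℝ) = (x₂:ℝ) / (s:ℝ) := by rw [hx₂]; push_cast; ring
    rw [h0, abs_div, abs_of_pos hsR, div_le_iff₀ hsR] at hXQ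
    calc |(x₂:ℝ)| ≤ 2 * t * s := hXQ
      _ = 2 * s * t := by ring
  have hcube : ∀ y : ℤ, |(y:ℝ)| ≤ 2 * s * t →
      |((y ^ 3 + A * s ^ 2 * y + B * s ^ 3 : ℤ) : ℝ)| ≤ 11 * (s:ℝ) ^ 3 * t ^ 3 := by
    intro y hy
    have h3 : |(y:ℝ)| ^ 3 ≤ (2 * s * t) ^ 3 := pow_le_pow_left₀ (abs_nonneg _) hy 3
    have h4 : |(A:ℝ)| * |(y:ℝ)| ≤ t ^ 2 * (2 * s * t) :=
      mul_le_mul hA hy (abs_nonneg _) (by positivity)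
    have h5 : |((y ^ 3 + A * s ^ 2 * y + B * s ^ 3 : ℤ) : ℝ)|
        ≤ |(y:ℝ)| ^ 3 + |(A:ℝ)| * (s:ℝ) ^ 2 * |(y:ℝ)| + |(B:ℝ)| * (s:ℝ) ^ 3 := by
      push_cast
      calc |(y:ℝ) ^ 3 + (A:ℝ) * (s:ℝ) ^ 2 * (y:ℝ) + (B:ℝ) * (s:ℝ) ^ 3|
          ≤ |(y:ℝ) ^ 3 + (A:ℝ) * (s:ℝ) ^ 2 * (y:ℝ)| + |(B:ℝ) * (s:ℝ) ^ 3| := abs_add_le _ _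
        _ ≤ |(y:ℝ) ^ 3| + |(A:ℝ) * (s:ℝ) ^ 2 * (y:ℝ)| + |(B:ℝ) * (s:ℝ) ^ 3| := by
            have := abs_add_le ((y:ℝ) ^ 3) ((A:ℝ) * (s:ℝ) ^ 2 * (y:ℝ)); linarith
        _ = |(y:ℝ)| ^ 3 + |(A:ℝ)| * (s:ℝ) ^ 2 * |(y:ℝ)| + |(B:ℝ)| * (s:ℝ) ^ 3 := by
            rw [abs_pow, abs_mul, abs_mul, abs_mul, abs_pow, abs_of_pos hsR,
              abs_of_pos (pow_pos hsR 3)]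
    refine h5.trans ?_
    nlinarith [mul_le_mul_of_nonneg_right h4 (sq_nonneg (s:ℝ)),
      mul_le_mul_of_nonneg_right hB (pow_nonneg hsR.le 3), sq_nonneg (s:ℝ), ht0.le, hsR.le,
      mul_pos hsR ht0]
  have hm1b : |(m₁:ℝ)| ≤ 11 * (s:ℝ) ^ 3 * t ^ 3 := by rw [hm1def]; exact hcube x₁ hx1b
  have hm2b : |(m₂:ℝ)| ≤ 11 * (s:ℝ) ^ 3 * t ^ 3 := by rw [hm2def]; exact hcube x₂ hx2b
  have hwb : |(w:ℝ)| ≤ 11 * (s:ℝ) ^ 3 * t ^ 3 := by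
    have hcast : ((w:ℝ)) ^ 2 = (m₁:ℝ) * (m₂:ℝ) := by
      have := hw2
      have h2 : ((w ^ 2 : ℤ) : ℝ) = ((m₁ * m₂ : ℤ) : ℝ) := by rw [this]
      push_cast at h2
      exact h2
    have hC : (0:ℝ) < 11 * (s:ℝ) ^ 3 * t ^ 3 := by positivity
    have hsq2 : ((w:ℝ)) ^ 2 ≤ (11 * (s:ℝ) ^ 3 * t ^ 3) ^ 2 := by
      rw [hcast]
      calc (m₁:ℝ) * (m₂:ℝ) ≤ |(m₁:ℝ) * (m₂:ℝ)| := le_abs_self _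
        _ = |(m₁:ℝ)| * |(m₂:ℝ)| := abs_mul _ _
        _ ≤ (11 * (s:ℝ) ^ 3 * t ^ 3) ^ 2 := by
            nlinarith [mul_le_mul hm1b hm2b (abs_nonneg _) hC.le]
    nlinarith [sq_abs (w:ℝ), abs_nonneg (w:ℝ), hC]
  have hNb : |(N:ℝ)| ≤ 44 * (s:ℝ) ^ 3 * t ^ 3 := by
    have t1 : |(x₁:ℝ) * (x₂:ℝ) + (A:ℝ) * (s:ℝ) ^ 2| ≤ 5 * (s:ℝ) ^ 2 * t ^ 2 := by
      calc |(x₁:ℝ) * (x₂:ℝ) + (A:ℝ) * (s:ℝ) ^ 2|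
          ≤ |(x₁:ℝ) * (x₂:ℝ)| + |(A:ℝ) * (s:ℝ) ^ 2| := abs_add_le _ _
        _ = |(x₁:ℝ)| * |(x₂:ℝ)| + |(A:ℝ)| * (s:ℝ) ^ 2 := by
            rw [abs_mul, abs_mul, abs_pow, abs_of_pos hsR]
        _ ≤ 5 * (s:ℝ) ^ 2 * t ^ 2 := by
            nlinarith [mul_le_mul hx1b hx2b (abs_nonneg _) (by positivity : (0:ℝ) ≤ 2 * s * t),
              mul_le_mul_of_nonneg_right hA (sq_nonneg (s:ℝ))]
    have t2 : |(x₁:ℝ) + (x₂:ℝ)| ≤ 4 * s * t := by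
      have := abs_add_le (x₁:ℝ) (x₂:ℝ); linarith
    have t3 : |((x₁:ℝ) * x₂ + (A:ℝ) * s ^ 2) * ((x₁:ℝ) + x₂)| ≤ 20 * (s:ℝ) ^ 3 * t ^ 3 := by
      rw [abs_mul]
      calc |(x₁:ℝ) * (x₂:ℝ) + (A:ℝ) * (s:ℝ) ^ 2| * |(x₁:ℝ) + (x₂:ℝ)|
          ≤ (5 * (s:ℝ) ^ 2 * t ^ 2) * (4 * s * t) :=
            mul_le_mul t1 t2 (abs_nonneg _) (by positivity)
        _ = 20 * (s:ℝ) ^ 3 * t ^ 3 := by ring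
    have t4 : |2 * (B:ℝ) * (s:ℝ) ^ 3| ≤ 2 * (s:ℝ) ^ 3 * t ^ 3 := by
      rw [abs_mul, abs_mul, abs_pow, abs_of_pos hsR]
      have : |(2:ℝ)| = 2 := by norm_num
      rw [this]
      nlinarith [mul_le_mul_of_nonneg_right hB (pow_nonneg hsR.le 3)]
    have h5 : |(N:ℝ)| ≤ |((x₁:ℝ) * x₂ + (A:ℝ) * s ^ 2) * ((x₁:ℝ) + x₂)|
        + |2 * (B:ℝ) * (s:ℝ) ^ 3| + 2 * |(w:ℝ)| := by
      rw [hNdef]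
      push_cast
      have ha := abs_add_le (((x₁:ℝ) * x₂ + (A:ℝ) * s ^ 2) * ((x₁:ℝ) + x₂)) (2 * (B:ℝ) * (s:ℝ) ^ 3)
      have hb := abs_add_le (((x₁:ℝ) * x₂ + (A:ℝ) * s ^ 2) * ((x₁:ℝ) + x₂) + 2 * (B:ℝ) * (s:ℝ) ^ 3)
        (-(2 * (w:ℝ)))
      rw [abs_neg] at hb
      have hc : |2 * (w:ℝ)| = 2 * |(w:ℝ)| := by rw [abs_mul]; norm_num
      calc |((x₁:ℝ) * ↑x₂ + ↑A * ↑s ^ 2) * (↑x₁ + ↑x₂) + 2 * ↑B * ↑s ^ 3 - 2 * ↑w|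
          = |(((x₁:ℝ) * ↑x₂ + ↑A * ↑s ^ 2) * (↑x₁ + ↑x₂) + 2 * ↑B * ↑s ^ 3) + -(2 * ↑w)| := by
            ring_nf
        _ ≤ _ := by rw [hc] at hb; linarith
    refine h5.trans ?_
    linarith [t3, t4, hwb]
  have hDb : (D:ℝ) ≤ 44 * (s:ℝ) ^ 3 * t ^ 3 := by
    have h1 : |(x₁:ℝ) - (x₂:ℝ)| ≤ 4 * s * t := by
      have := abs_sub (x₁:ℝ) (x₂:ℝ)
      have h2 := abs_add_le (x₁:ℝ) (-(x₂:ℝ))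
      rw [abs_neg] at h2
      calc |(x₁:ℝ) - (x₂:ℝ)| = |(x₁:ℝ) + -(x₂:ℝ)| := by ring_nf
        _ ≤ |(x₁:ℝ)| + |(x₂:ℝ)| := h2
        _ ≤ 4 * s * t := by linarith
    have h2 : ((x₁:ℝ) - x₂) ^ 2 ≤ (4 * s * t) ^ 2 := by
      rw [← sq_abs]
      exact pow_le_pow_left₀ (abs_nonneg _) h1 2
    have h3 : (D:ℝ) = (s:ℝ) * ((x₁:ℝ) - x₂) ^ 2 := by rw [hDdef]; push_cast; ring
    rw [h3]
    nlinarith [mul_le_mul_of_nonneg_left h2 hsR.le, hsR, ht0, ht1,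
      mul_nonneg (mul_nonneg (pow_nonneg hsR.le 3) (sq_nonneg t))
        (by linarith : (0:ℝ) ≤ t - 1)]
  have hqh := qh_le_of_eq_div _ N D hD (hxadd.trans key) (44 * (s:ℝ) ^ 3 * t ^ 3) hNb hDb
  refine le_trans hqh ?_
  have hlog : Real.log (44 * (s:ℝ) ^ 3 * t ^ 3)
      = Real.log 44 + 3 * Real.log s + (1/2) * Real.log (Xval A B) := by
    rw [Real.log_mul (by positivity) (by positivity), Real.log_mul (by norm_num) (by positivity),
      Real.log_pow, Real.log_pow, ht, Real.log_rpow hX0]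
    push_cast
    ring
  rw [hlog]
  have h44 : Real.log 44 ≤ 3.9 := by
    rw [Real.log_le_iff_le_exp (by norm_num)]
    have h1 : (2.71:ℝ) < Real.exp 1 := by
      have := Real.exp_one_gt_d9
      nlinarith
    have h2 : (1.1:ℝ) ≤ Real.exp 0.1 := by
      have := Real.add_one_le_exp (0.1:ℝ)
      nlinarith
    have e39 : Real.exp (3.9:ℝ) = Real.exp 1 ^ 3 * Real.exp 0.1 ^ 9 := by
      rw [← Real.exp_nat_mul, ← Real.exp_nat_mul, ← Real.exp_add]
      norm_num
    rw [e39]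
    have h3 : (2.71:ℝ) ^ 3 ≤ Real.exp 1 ^ 3 := pow_le_pow_left₀ (by norm_num) h1.le 3
    have h4 : (1.1:ℝ) ^ 9 ≤ Real.exp 0.1 ^ 9 := pow_le_pow_left₀ (by norm_num) h2 9
    nlinarith [h3, h4, pow_pos (lt_of_lt_of_le (by norm_num : (0:ℝ) < 2.71) h1.le) 3]
  linarith
end

section
/- Let N be a positive integer, let a, u be positive integers and b, v integers with v ≠ 0, gcd(a, b) = 1 and gcd(u, v) = 1, and set s = lcm(a, u). For 1 ≤ i ≤ N let r_i = b/a + (i−1)·(v/u) and let x_i = s·r_i (which is an integer). Let 0 < δ < 1 be real and m = ⌈1/δ⌉. If s ≥ ∏_{j=1}^{2m−1} j!, then the number of indices i ∈ {1, …, N} with gcd(x_i, s) ≤ s^δ is at least ⌊N/(2m)⌋. -/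
open scoped TensorProduct

lemma miniA (c k : ℕ) : (∏ i ∈ Finset.Icc (c+1) (c+k), (i - c)) = Nat.factorial k := by
  induction k with
  | zero => simp
  | succ k ih =>
      rw [show c + (k+1) = (c+k) + 1 from rfl,
        Finset.prod_Icc_succ_top (by omega), ih, Nat.factorial_succ]
      rw [show c + k + 1 - c = k + 1 by omega]
      ring

lemma miniB (c k : ℕ) : (∏ i ∈ Finset.Icc (c+1) (c+k), (c+k+1 - i)) = Nat.factorial k := by
  rw [← miniA c k]
  apply Finset.prod_nbij' (fun i => 2*c+k+1-i) (fun j => 2*c+k+1-j) <;>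
    simp only [Finset.mem_Icc] <;> intros <;> omega

lemma windowProd (S : ℕ) (hS : S ≠ 0) (D : ℕ → ℕ) (hDS : ∀ i, D i ∣ S)
    (hkey : ∀ i j, i < j → Nat.gcd (D i) (D j) ∣ j - i)
    (c L : ℕ) (hL : 0 < L) :
    (∏ i ∈ Finset.Icc (c+1) (c+L), D i) ∣ S * Nat.factorial (L-1) := by
  have hD0 : ∀ i, D i ≠ 0 := by
    intro i h
    exact hS (zero_dvd_iff.mp (h ▸ hDS i))
  set W := Finset.Icc (c+1) (c+L) with hW
  have hprodne : (∏ i ∈ W, D i) ≠ 0 := Finset.prod_ne_zero_iff.mpr fun i _ => hD0 i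
  have hRne : S * Nat.factorial (L-1) ≠ 0 := mul_ne_zero hS (Nat.factorial_ne_zero _)
  rw [← Nat.factorization_le_iff_dvd hprodne hRne, Finsupp.le_def]
  intro p
  rw [Nat.factorization_prod (fun i _ => hD0 i),
    Nat.factorization_mul hS (Nat.factorial_ne_zero _)]
  rw [Finset.sum_apply', Finsupp.add_apply]
  have hWne : W.Nonempty := ⟨c+1, by simp [hW]; omega⟩
  obtain ⟨i0, hi0, hmax⟩ := W.exists_max_image (fun i => (D i).factorization p) hWne
  have hi0' : c + 1 ≤ i0 ∧ i0 ≤ c + L := Finset.mem_Icc.mp hi0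
  rw [← Finset.add_sum_erase _ _ hi0]
  have h1 : (D i0).factorization p ≤ S.factorization p :=
    Finsupp.le_def.mp ((Nat.factorization_le_iff_dvd (hD0 i0) hS).mpr (hDS i0)) p
  have h2 : (∑ i ∈ W.erase i0, (D i).factorization p) ≤
      (Nat.factorial (L-1)).factorization p := by
    set E : ℕ → ℕ := fun i => if i < i0 then i0 - i else i - i0 with hE
    have hE0 : ∀ i ∈ W.erase i0, E i ≠ 0 := by
      intro i hi
      have := Finset.mem_erase.mp hi
      simp only [hE]
      split <;> omega
    have h3 : ∀ i ∈ W.erase i0, (D i).factorization p ≤ (E i).factorization p := by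
      intro i hi
      obtain ⟨hne, hiW⟩ := Finset.mem_erase.mp hi
      have hle : (D i).factorization p ≤ (D i0).factorization p := hmax i hiW
      have hgcd : (Nat.gcd (D i) (D i0)).factorization p = (D i).factorization p := by
        rw [Nat.factorization_gcd (hD0 i) (hD0 i0)]
        simp [min_eq_left hle]
      rw [← hgcd]
      have hdvd : Nat.gcd (D i) (D i0) ∣ E i := by
        simp only [hE]
        rcases lt_or_gt_of_ne hne with h | h
        · simpa [h] using hkey i i0 h
        · simp only [if_neg (not_lt.mpr h.le)]
          rw [Nat.gcd_comm]
          exact hkey i0 i h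
      exact Finsupp.le_def.mp ((Nat.factorization_le_iff_dvd
        (Nat.gcd_ne_zero_left (hD0 i)) (hE0 i hi)).mpr hdvd) p
    calc (∑ i ∈ W.erase i0, (D i).factorization p)
        ≤ ∑ i ∈ W.erase i0, (E i).factorization p := Finset.sum_le_sum h3
      _ = (∏ i ∈ W.erase i0, E i).factorization p := by
          rw [Nat.factorization_prod hE0, Finset.sum_apply']
      _ ≤ (Nat.factorial (L-1)).factorization p := by
          have hEprod : (∏ i ∈ W.erase i0, E i) ∣ Nat.factorial (L-1) := by
            have hsplit : W.erase i0 =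
                Finset.Icc (c+1) (i0-1) ∪ Finset.Icc (i0+1) (c+L) := by
              ext i
              simp only [Finset.mem_erase, hW, Finset.mem_Icc, Finset.mem_union]
              omega
            have hdisj : Disjoint (Finset.Icc (c+1) (i0-1)) (Finset.Icc (i0+1) (c+L)) := by
              rw [Finset.disjoint_left]
              intro i hi hi'
              simp only [Finset.mem_Icc] at hi hi'
              omega
            rw [hsplit, Finset.prod_union hdisj]
            have e1 : (∏ i ∈ Finset.Icc (c+1) (i0-1), E i) = Nat.factorial (i0-1-c) := by
              rw [← miniB c (i0-1-c)]
              apply Finset.prod_congr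
              · congr 1; omega
              · intro i hi
                simp only [Finset.mem_Icc] at hi
                simp only [hE, if_pos (by omega : i < i0)]
                omega
            have e2 : (∏ i ∈ Finset.Icc (i0+1) (c+L), E i) = Nat.factorial (c+L-i0) := by
              rw [← miniA i0 (c+L-i0)]
              apply Finset.prod_congr
              · congr 1; omega
              · intro i hi
                simp only [Finset.mem_Icc] at hi
                simp only [hE, if_neg (by omega : ¬ i < i0)]
            rw [e1, e2, show L - 1 = (i0-1-c) + (c+L-i0) by omega]
            exact Nat.factorial_mul_factorial_dvd_factorial_add _ _
          exact Finsupp.le_def.mp ((Nat.factorization_le_iff_dvd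
            (Finset.prod_ne_zero_iff.mpr hE0) (Nat.factorial_ne_zero _)).mpr hEprod) p
  omega

theorem statement11 (N : ℕ) (hN : 0 < N)
    (a u : ℤ) (ha : 0 < a) (hu : 0 < u) (b v : ℤ) (hv : v ≠ 0)
    (hab : Int.gcd a b = 1) (huv : Int.gcd u v = 1)
    (s : ℤ) (hs : s = Int.lcm a u)
    (r : ℕ → ℚ) (hr : ∀ i : ℕ, r i = (b : ℚ) / (a : ℚ) + ((i : ℚ) - 1) * ((v : ℚ) / (u : ℚ)))
    (x : ℕ → ℤ) (hx : ∀ i : ℕ, (x i : ℚ) = (s : ℚ) * r i)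
    (δ : ℝ) (hδ0 : 0 < δ) (hδ1 : δ < 1) (m : ℕ) (hm : m = ⌈1 / δ⌉₊)
    (hbig : (∏ j ∈ Finset.Icc 1 (2 * m - 1), (Nat.factorial j : ℤ)) ≤ s) :
    (N / (2 * m) : ℕ) ≤
      ((Finset.Icc 1 N).filter fun i => (Int.gcd (x i) s : ℝ) ≤ (s : ℝ) ^ δ).card := by
  have ha0 : a ≠ 0 := ha.ne'
  have hu0 : u ≠ 0 := hu.ne'
  have hlcm0 : Int.lcm a u ≠ 0 :=
    Nat.lcm_ne_zero (by simpa using ha0) (by simpa using hu0)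
  have hspos : 0 < s := by
    rw [hs]
    exact_mod_cast Nat.pos_of_ne_zero hlcm0
  have hs0 : s ≠ 0 := hspos.ne'
  have hadvd : a ∣ s := by rw [hs]; exact Int.dvd_lcm_left _ _
  have hudvd : u ∣ s := by rw [hs]; exact Int.dvd_lcm_right _ _
  set A : ℤ := s / a with hAdef
  set U : ℤ := s / u with hUdef
  have hA : A * a = s := Int.ediv_mul_cancel hadvd
  have hU : U * u = s := Int.ediv_mul_cancel hudvd
  set g : ℤ := (Int.gcd a u : ℤ) with hgdef
  have hgn0 : Int.gcd a u ≠ 0 := by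
    simp only [ne_eq, Int.gcd_eq_zero_iff]
    tauto
  have hg0 : g ≠ 0 := by simpa [hgdef] using hgn0
  have hlcmeq : g * s = a * u := by
    rw [hs, hgdef, ← Int.natAbs_of_nonneg (by positivity : (0:ℤ) ≤ a * u)]
    rw [Int.natAbs_mul]
    exact_mod_cast Int.gcd_mul_lcm a u
  have hUg : U * g = a :=
    mul_right_cancel₀ hu0 (by calc (U * g) * u = g * (U * u) := by ring
      _ = g * s := by rw [hU]
      _ = a * u := hlcmeq)
  have hAg : A * g = u :=
    mul_right_cancel₀ ha0 (by calc (A * g) * a = g * (A * a) := by ring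
      _ = g * s := by rw [hA]
      _ = u * a := by rw [hlcmeq]; ring)
  have hUA : IsCoprime U A := by
    rw [Int.isCoprime_iff_gcd_eq_one]
    have h := Int.gcd_mul_right U g A
    rw [hUg, hAg] at h
    have h2 : g.natAbs = Int.gcd a u := by simp [hgdef]
    rw [h2] at h
    exact Nat.mul_right_cancel (Nat.pos_of_ne_zero hgn0) (by rw [one_mul]; exact h.symm)
  -- x formula
  have haq : (a:ℚ) ≠ 0 := by exact_mod_cast ha0
  have huq : (u:ℚ) ≠ 0 := by exact_mod_cast hu0
  have hAq : (A:ℚ) * a = s := by exact_mod_cast hA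
  have hUq : (U:ℚ) * u = s := by exact_mod_cast hU
  have hxf : ∀ i : ℕ, x i = A * b + ((i:ℤ) - 1) * (U * v) := by
    intro i
    have : (x i : ℚ) = ((A * b + ((i:ℤ) - 1) * (U * v) : ℤ) : ℚ) := by
      rw [hx, hr]
      push_cast
      field_simp
      linear_combination (-(((i:ℚ) - 1) * (v:ℚ) * (a:ℚ))) * hUq - ((b:ℚ) * (u:ℚ)) * hAq
    exact_mod_cast this
  -- coprimality
  have hUb : IsCoprime U b := by
    have hab' : IsCoprime a b := Int.isCoprime_iff_gcd_eq_one.mpr hab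
    exact hab'.of_isCoprime_of_dvd_left ⟨g, hUg.symm⟩
  have hUx : ∀ i : ℕ, IsCoprime U (x i) := by
    intro i
    have h1 : IsCoprime U (A * b) := hUA.mul_right hUb
    rw [hxf i, show A * b + ((i:ℤ) - 1) * (U * v) = A * b + U * (((i:ℤ) - 1) * v) by ring]
    exact h1.add_mul_left_right _
  -- key divisibility
  have hkey : ∀ i j : ℕ, i < j →
      Nat.gcd (Int.gcd (x i) s) (Int.gcd (x j) s) ∣ j - i := by
    intro i j hij
    set c : ℤ := (Nat.gcd (Int.gcd (x i) s) (Int.gcd (x j) s) : ℤ) with hcdef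
    have hcxi : c ∣ x i := (Int.natCast_dvd_natCast.mpr (Nat.gcd_dvd_left _ _)).trans
      (Int.gcd_dvd_left _ _)
    have hcxj : c ∣ x j := (Int.natCast_dvd_natCast.mpr (Nat.gcd_dvd_right _ _)).trans
      (Int.gcd_dvd_left _ _)
    have hcs : c ∣ s := (Int.natCast_dvd_natCast.mpr (Nat.gcd_dvd_left _ _)).trans
      (Int.gcd_dvd_right _ _)
    have hdiff : c ∣ ((j:ℤ) - (i:ℤ)) * (U * v) := by
      have : x j - x i = ((j:ℤ) - (i:ℤ)) * (U * v) := by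
        rw [hxf i, hxf j]; ring
      exact this ▸ dvd_sub hcxj hcxi
    have hcU : IsCoprime c U := ((hUx i).of_isCoprime_of_dvd_right hcxi).symm
    have hcv : IsCoprime c v := by
      rw [Int.isCoprime_iff_gcd_eq_one]
      set e : ℤ := (Int.gcd c v : ℤ) with hedef
      have hec : e ∣ c := Int.gcd_dvd_left _ _
      have hev : e ∣ v := Int.gcd_dvd_right _ _
      have heu : IsCoprime e u :=
        ((Int.isCoprime_iff_gcd_eq_one.mpr huv).of_isCoprime_of_dvd_right hev).symm
      have heU : e ∣ U := heu.dvd_of_dvd_mul_right (by rw [hU]; exact hec.trans hcs)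
      have hexi : e ∣ x i := hec.trans hcxi
      have : IsUnit e := (hUx i).isUnit_of_dvd' heU hexi
      rw [Int.isUnit_iff] at this
      have he1 : e = 1 := by
        rcases this with h | h
        · exact h
        · exfalso
          have h0 : (0:ℤ) ≤ e := hedef ▸ Int.natCast_nonneg _
          omega
      rw [hedef] at he1
      exact_mod_cast he1
    have hfin : c ∣ (j:ℤ) - (i:ℤ) := (hcU.mul_right hcv).dvd_of_dvd_mul_right hdiff
    have h5 : c ∣ ((j - i : ℕ) : ℤ) := by
      rwa [show ((j - i : ℕ) : ℤ) = (j:ℤ) - (i:ℤ) by omega]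
    rw [hcdef] at h5
    exact_mod_cast h5
  -- numeric setup
  set D : ℕ → ℕ := fun i => Int.gcd (x i) s with hDdef
  set S : ℕ := s.toNat with hSdef
  have hSs : (S : ℤ) = s := Int.toNat_of_nonneg hspos.le
  have hS0 : S ≠ 0 := by omega
  have hDS : ∀ i, D i ∣ S := by
    intro i
    rw [← Int.natCast_dvd_natCast, hSs]
    exact Int.gcd_dvd_right _ _
  have hm2 : 2 ≤ m := by
    have h1 : (1:ℝ) < 1 / δ := by
      rw [lt_div_iff₀ hδ0]; linarith
    have := Nat.lt_ceil.mpr (by exact_mod_cast h1 : ((1:ℕ) : ℝ) < 1 / δ)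
    omega
  have hmδ : 1 ≤ (m : ℝ) * δ := by
    have h1 : 1 / δ ≤ (m : ℝ) := hm ▸ Nat.le_ceil _
    calc (1:ℝ) = (1/δ) * δ := by field_simp
      _ ≤ (m:ℝ) * δ := by gcongr
  have hbigN : (∏ j ∈ Finset.Icc 1 (2 * m - 1), Nat.factorial j) ≤ S := by
    have : ((∏ j ∈ Finset.Icc 1 (2 * m - 1), Nat.factorial j : ℕ) : ℤ) ≤ (S : ℤ) := by
      rw [hSs]; push_cast; exact_mod_cast hbig
    exact_mod_cast this
  have hfactS : Nat.factorial (2 * m - 1) ≤ S := by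
    refine le_trans (Nat.le_of_dvd ?_ (Finset.dvd_prod_of_mem _ ?_)) hbigN
    · exact Finset.prod_pos fun j _ => Nat.factorial_pos j
    · simp only [Finset.mem_Icc]; omega
  have hS1 : (1:ℝ) ≤ (S:ℝ) := by exact_mod_cast Nat.one_le_iff_ne_zero.mpr hS0
  have hsS : ((S:ℝ)) = (s:ℝ) := by exact_mod_cast congrArg (Int.cast : ℤ → ℝ) hSs
  -- window claim
  have hwin : ∀ c : ℕ, ∃ i, i ∈ Finset.Icc (c+1) (c+2*m) ∧ ((D i : ℝ)) ≤ (s:ℝ) ^ δ := by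
    intro c
    by_contra hcon
    push_neg at hcon
    have hdvd : (∏ i ∈ Finset.Icc (c+1) (c+2*m), D i) ∣ S * Nat.factorial (2*m - 1) :=
      windowProd S hS0 D hDS (fun i j hij => hkey i j hij) c (2*m) (by omega)
    have hub : ((∏ i ∈ Finset.Icc (c+1) (c+2*m), D i : ℕ) : ℝ) ≤ (S:ℝ) * (S:ℝ) := by
      have h1 : (∏ i ∈ Finset.Icc (c+1) (c+2*m), D i) ≤ S * Nat.factorial (2*m-1) :=
        Nat.le_of_dvd (by positivity) hdvd
      have h2 : S * Nat.factorial (2*m-1) ≤ S * S := Nat.mul_le_mul_left S hfactS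
      exact_mod_cast le_trans h1 h2
    have hlb : ((s:ℝ) ^ δ) ^ (2*m) < ((∏ i ∈ Finset.Icc (c+1) (c+2*m), D i : ℕ) : ℝ) := by
      push_cast
      have := Finset.prod_lt_prod_of_nonempty
        (f := fun _ : ℕ => (s:ℝ) ^ δ) (g := fun i => ((D i : ℕ) : ℝ))
        (s := Finset.Icc (c+1) (c+2*m))
        (fun i _ => Real.rpow_pos_of_pos (by exact_mod_cast hspos) δ)
        (fun i hi => hcon i hi)
        ⟨c+1, by simp only [Finset.mem_Icc]; omega⟩
      rwa [Finset.prod_const, Nat.card_Icc, show c + 2*m + 1 - (c+1) = 2*m by omega] at this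
    have hexp : (S:ℝ) * (S:ℝ) ≤ ((s:ℝ) ^ δ) ^ (2*m) := by
      rw [← hsS, ← Real.rpow_natCast ((S:ℝ) ^ δ) (2*m), ← Real.rpow_mul (by linarith)]
      calc (S:ℝ) * (S:ℝ) = (S:ℝ) ^ (2:ℝ) := by
            rw [show (2:ℝ) = ((2:ℕ):ℝ) by norm_num, Real.rpow_natCast]; ring
        _ ≤ (S:ℝ) ^ (δ * (2*m : ℕ)) := by
            apply Real.rpow_le_rpow_of_exponent_le hS1
            push_cast
            nlinarith
    have : (S:ℝ) * (S:ℝ) < (S:ℝ) * (S:ℝ) := lt_of_le_of_lt hexp (lt_of_lt_of_le hlb hub)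
    exact absurd this (lt_irrefl _)
  -- counting
  choose f hf1 hf2 using hwin
  set K := N / (2*m) with hK
  have hKN : K * (2*m) ≤ N := Nat.div_mul_le_self N (2*m)
  apply le_trans (le_of_eq (Finset.card_range K).symm)
  apply Finset.card_le_card_of_injOn (fun k => f (2*m*k))
  · intro k hk
    rw [Finset.mem_coe, Finset.mem_range] at hk
    have hmem := hf1 (2*m*k)
    rw [Finset.mem_Icc] at hmem
    rw [Finset.mem_coe, Finset.mem_filter, Finset.mem_Icc]
    have hub : 2*m*k + 2*m ≤ N := by
      have : (k+1) * (2*m) ≤ K * (2*m) := Nat.mul_le_mul_right _ (by omega)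
      calc 2*m*k + 2*m = (k+1)*(2*m) := by ring
        _ ≤ K * (2*m) := this
        _ ≤ N := hKN
    beta_reduce
    refine ⟨⟨by omega, by omega⟩, ?_⟩
    exact hf2 (2*m*k)
  · intro k hk k' hk' heq
    simp only [Finset.coe_range, Set.mem_Iio] at hk hk'
    have h1 := Finset.mem_Icc.mp (hf1 (2*m*k))
    have h2 := Finset.mem_Icc.mp (hf1 (2*m*k'))
    simp only at heq
    rw [heq] at h1
    have e1 : (f (2*m*k') - 1) / (2*m) = k := by
      apply Nat.div_eq_of_lt_le
      · calc k * (2*m) = 2*m*k := by ring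
          _ ≤ f (2*m*k') - 1 := by omega
      · calc f (2*m*k') - 1 < 2*m*k + 2*m := by omega
          _ = (k+1) * (2*m) := by ring
    have e2 : (f (2*m*k') - 1) / (2*m) = k' := by
      apply Nat.div_eq_of_lt_le
      · calc k' * (2*m) = 2*m*k' := by ring
          _ ≤ f (2*m*k') - 1 := by omega
      · calc f (2*m*k') - 1 < 2*m*k' + 2*m := by omega
          _ = (k'+1) * (2*m) := by ring
    omega
end

section
/- Let a, u be positive integers and b, v integers with v ≠ 0, gcd(a, b) = 1 and gcd(u, v) = 1. Set g = gcd(a, u), a' = a/g, u' = u/g and s = g·a'·u' (so s = lcm(a, u)). For n ≥ 1 let x_n = b·u' + (n−1)·v·a'. Then for all indices 1 ≤ i < j, the integer gcd(gcd(x_i, s), gcd(x_j, s)) divides j − i. -/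
open scoped TensorProduct

theorem statement12 (a u : ℤ) (ha : 0 < a) (hu : 0 < u) (b v : ℤ) (hv : v ≠ 0)
    (hab : Int.gcd a b = 1) (huv : Int.gcd u v = 1)
    (g a' u' s : ℤ) (hg : g = Int.gcd a u) (ha' : a = g * a') (hu' : u = g * u')
    (hs : s = g * a' * u')
    (x : ℕ → ℤ) (hx : ∀ n : ℕ, x n = b * u' + ((n : ℤ) - 1) * v * a')
    (i j : ℕ) (hi : 1 ≤ i) (hij : i < j) :
    ((Int.gcd (Int.gcd (x i) s) (Int.gcd (x j) s) : ℤ)) ∣ ((j : ℤ) - (i : ℤ)) := by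
  set d : ℤ := ((Int.gcd (Int.gcd (x i) s) (Int.gcd (x j) s) : ℤ)) with hd
  have hdi : d ∣ x i := dvd_trans (Int.gcd_dvd_left _ _) (Int.gcd_dvd_left _ _)
  have hdj : d ∣ x j := dvd_trans (Int.gcd_dvd_right _ _) (Int.gcd_dvd_left _ _)
  have hds : d ∣ s := dvd_trans (Int.gcd_dvd_left _ _) (Int.gcd_dvd_right _ _)
  have hcab : IsCoprime a b := Int.isCoprime_iff_gcd_eq_one.mpr hab
  have hcuv : IsCoprime u v := Int.isCoprime_iff_gcd_eq_one.mpr huv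
  have hg0 : g ≠ 0 := by
    intro h0
    rw [h0, zero_mul] at ha'
    omega
  -- gcd a' u' = 1
  have hgau : Int.gcd a' u' = 1 := by
    have h1 : Int.gcd a u = g.natAbs * Int.gcd a' u' := by
      rw [ha', hu', Int.gcd_mul_left]
    have h2 : g.natAbs = Int.gcd a u := by
      rw [hg]; exact Int.natAbs_natCast _
    have hna : g.natAbs ≠ 0 := Int.natAbs_ne_zero.mpr hg0
    rw [← h2] at h1
    exact (Nat.eq_of_mul_eq_mul_left (Nat.pos_of_ne_zero hna)
      (by rw [← h1, Nat.mul_one])).symm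
  have hcau : IsCoprime a' u' := Int.isCoprime_iff_gcd_eq_one.mpr hgau
  have hcop : IsCoprime d (v * a') := by
    rw [Int.isCoprime_iff_gcd_eq_one]
    by_contra hne
    obtain ⟨p, hp, hpdvd⟩ := Int.exists_prime_and_dvd (n := (Int.gcd d (v * a') : ℤ)) (by
      simpa using hne)
    have hpd : p ∣ d := hpdvd.trans (Int.gcd_dvd_left _ _)
    have hpva : p ∣ v * a' := hpdvd.trans (Int.gcd_dvd_right _ _)
    have hps : p ∣ g * a' * u' := hs ▸ hpd.trans hds
    have hpxi : p ∣ x i := hpd.trans hdi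
    have hpa' : p ∣ a' := by
      rcases (hp.dvd_mul.mp hpva) with hpv | h
      · -- p ∣ v, so p ∤ u, p ∤ g, p ∤ u'
        have hpu : ¬ p ∣ u := fun h => hp.not_unit (hcuv.isUnit_of_dvd' h hpv)
        rcases hp.dvd_mul.mp hps with h1 | h1
        · rcases hp.dvd_mul.mp h1 with h2 | h2
          · exact absurd (hu' ▸ Dvd.dvd.mul_right h2 u') hpu
          · exact h2
        · exact absurd (hu' ▸ Dvd.dvd.mul_left h1 g) hpu
      · exact h
    have hpa : p ∣ a := ha' ▸ hpa'.mul_left g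
    have hpbu : p ∣ b * u' := by
      have h1 : p ∣ ((i : ℤ) - 1) * v * a' := (hpa'.mul_left _)
      have h2 : b * u' = x i - ((i : ℤ) - 1) * v * a' := by rw [hx i]; ring
      rw [h2]; exact dvd_sub hpxi h1
    rcases hp.dvd_mul.mp hpbu with h1 | h1
    · exact hp.not_unit (hcab.isUnit_of_dvd' hpa h1)
    · exact hp.not_unit (hcau.isUnit_of_dvd' hpa' h1)
  have hdvd : d ∣ ((j : ℤ) - (i : ℤ)) * (v * a') := by
    have : x j - x i = ((j : ℤ) - (i : ℤ)) * (v * a') := by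
      rw [hx i, hx j]; ring
    rw [← this]; exact dvd_sub hdj hdi
  exact hcop.dvd_of_dvd_mul_right hdvd
end

section
/- Let n be a positive integer and let g₁, …, g_n be positive integers such that gcd(g_i, g_j) divides j − i for all 1 ≤ i < j ≤ n. Then the product g₁·g₂⋯g_n divides (∏_{j=1}^{n−1} j!) · lcm(g₁, …, g_n). -/
open scoped TensorProduct

theorem statement13 (n : ℕ) (hn : 0 < n) (g : ℕ → ℕ)
    (hg : ∀ i ∈ Finset.Icc 1 n, 0 < g i)
    (hgcd : ∀ i j : ℕ, 1 ≤ i → i < j → j ≤ n → Nat.gcd (g i) (g j) ∣ (j - i)) :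
    (∏ i ∈ Finset.Icc 1 n, g i) ∣
      (∏ j ∈ Finset.Icc 1 (n - 1), Nat.factorial j) * (Finset.Icc 1 n).lcm g := by
  set S := Finset.Icc 1 n with hS
  have hgne : ∀ i ∈ S, g i ≠ 0 := fun i hi => (hg i hi).ne'
  have hlcm0 : S.lcm g ≠ 0 := by
    rw [Ne, Finset.lcm_eq_zero_iff]
    rintro ⟨i, hi, h0⟩
    exact hgne i hi h0
  have hprod0 : (∏ i ∈ S, g i) ≠ 0 := Finset.prod_ne_zero_iff.mpr hgne
  have hrhs0 : (∏ j ∈ Finset.Icc 1 (n - 1), Nat.factorial j) * S.lcm g ≠ 0 :=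
    mul_ne_zero (Finset.prod_ne_zero_iff.mpr fun j _ => (Nat.factorial_pos j).ne') hlcm0
  rw [← Nat.factorization_le_iff_dvd hprod0 hrhs0]
  intro p
  by_cases hp : p.Prime
  swap
  · simp [Nat.factorization_eq_zero_of_not_prime _ hp]
  haveI : Fact p.Prime := ⟨hp⟩
  -- v i := p-adic valuation of g i
  set v : ℕ → ℕ := fun i => (g i).factorization p with hv
  have hLHS : (∏ i ∈ S, g i).factorization p = ∑ i ∈ S, v i := by
    rw [Nat.factorization_prod hgne]; simp [hv]
  -- M = max valuation
  set M := S.sup v with hM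
  -- lcm valuation ≥ M
  have hMlcm : M ≤ (S.lcm g).factorization p := by
    apply Finset.sup_le
    intro i hi
    have : g i ∣ S.lcm g := Finset.dvd_lcm hi
    exact (Nat.factorization_le_iff_dvd (hgne i hi) hlcm0).mpr this p
  -- counting lemma: for k ≥ 1, #{i ∈ S : k ≤ v i} ≤ (n-1)/p^k + 1
  have hcount : ∀ k, 1 ≤ k →
      (S.filter (fun i => k ≤ v i)).card ≤ (n - 1) / p ^ k + 1 := by
    intro k hk
    set T := S.filter (fun i => k ≤ v i) with hT
    rcases T.eq_empty_or_nonempty with hTe | hTne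
    · simp [hTe]
    have hdvd : ∀ i ∈ T, p ^ k ∣ g i := by
      intro i hi
      rw [hT, Finset.mem_filter] at hi
      exact (hp.pow_dvd_iff_le_factorization (hgne i hi.1)).mpr hi.2
    set m := T.min' hTne with hm
    have hmT : m ∈ T := T.min'_mem hTne
    have hmS : m ∈ S := (Finset.mem_filter.mp hmT).1
    have hm1 : 1 ≤ m := (Finset.mem_Icc.mp hmS).1
    have key : ∀ i ∈ T, p ^ k ∣ i - m := by
      intro i hi
      rcases eq_or_lt_of_le (T.min'_le i hi) with h | h
      · simp [← h, hm]
      · have hiS := (Finset.mem_filter.mp hi).1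
        have hin : i ≤ n := (Finset.mem_Icc.mp hiS).2
        exact dvd_trans (Nat.dvd_gcd (hdvd m hmT) (hdvd i hi))
          (hgcd m i hm1 h hin)
    have hinj : Set.InjOn (fun i => (i - m) / p ^ k) T := by
      intro i hi j hj hij
      have hi' : i - m = p ^ k * ((i - m) / p ^ k) := (Nat.mul_div_cancel' (key i hi)).symm
      have hj' : j - m = p ^ k * ((j - m) / p ^ k) := (Nat.mul_div_cancel' (key j hj)).symm
      have h1 : m ≤ i := T.min'_le i hi
      have h2 : m ≤ j := T.min'_le j hj
      simp only at hij
      rw [hij] at hi'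
      omega
    have hmap : ∀ i ∈ T, (i - m) / p ^ k ∈ Finset.range ((n - 1) / p ^ k + 1) := by
      intro i hi
      rw [Finset.mem_range, Nat.lt_succ_iff]
      apply Nat.div_le_div_right
      have : i ≤ n := (Finset.mem_Icc.mp (Finset.mem_filter.mp hi).1).2
      omega
    calc T.card ≤ (Finset.range ((n - 1) / p ^ k + 1)).card :=
          Finset.card_le_card_of_injOn _ hmap hinj
      _ = (n - 1) / p ^ k + 1 := Finset.card_range _
  -- double counting
  have hsum : ∑ i ∈ S, v i = ∑ k ∈ Finset.Icc 1 M, (S.filter (fun i => k ≤ v i)).card := by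
    simp only [Finset.card_filter]
    rw [Finset.sum_comm]
    apply Finset.sum_congr rfl
    intro i hi
    have hvi : v i ≤ M := Finset.le_sup hi
    calc v i = (Finset.Icc 1 (v i)).card := by simp
      _ = ((Finset.Icc 1 M).filter (fun k => k ≤ v i)).card := by
          congr 1
          ext k
          simp only [Finset.mem_Icc, Finset.mem_filter]
          omega
      _ = ∑ k ∈ Finset.Icc 1 M, if k ≤ v i then 1 else 0 := by rw [Finset.card_filter]
  -- Legendre bound
  have hfact : ∑ k ∈ Finset.Icc 1 M, (n - 1) / p ^ k ≤
      (∏ j ∈ Finset.Icc 1 (n - 1), Nat.factorial j).factorization p := by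
    have hdvd : Nat.factorial (n - 1) ∣ ∏ j ∈ Finset.Icc 1 (n - 1), Nat.factorial j := by
      rcases Nat.lt_or_ge n 2 with h | h
      · interval_cases n ; simp
      · exact Finset.dvd_prod_of_mem _ (Finset.mem_Icc.mpr ⟨by omega, le_refl _⟩)
    have h2 : ((n - 1).factorial).factorization p ≤
        (∏ j ∈ Finset.Icc 1 (n - 1), Nat.factorial j).factorization p :=
      (Nat.factorization_le_iff_dvd (Nat.factorial_ne_zero _)
        (Finset.prod_ne_zero_iff.mpr fun j _ => (Nat.factorial_pos j).ne')).mpr hdvd p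
    refine le_trans ?_ h2
    have hb : Nat.log p (n - 1) < M + Nat.log p (n - 1) + 1 := by omega
    rw [Nat.factorization_def _ hp, padicValNat_factorial hb]
    apply Finset.sum_le_sum_of_subset
    intro k hk
    rw [Finset.mem_Icc] at hk
    rw [Finset.mem_Ico]
    omega
  -- combine
  rw [Nat.factorization_mul (mul_ne_zero_iff.mp hrhs0).1 hlcm0] at *
  simp only [Finsupp.coe_add, Pi.add_apply]
  rw [hLHS, hsum]
  calc ∑ k ∈ Finset.Icc 1 M, (S.filter (fun i => k ≤ v i)).card
      ≤ ∑ k ∈ Finset.Icc 1 M, ((n - 1) / p ^ k + 1) :=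
        Finset.sum_le_sum fun k hk => hcount k (Finset.mem_Icc.mp hk).1
    _ = (∑ k ∈ Finset.Icc 1 M, (n - 1) / p ^ k) + M := by
        rw [Finset.sum_add_distrib]; simp
    _ ≤ (∏ j ∈ Finset.Icc 1 (n - 1), Nat.factorial j).factorization p
        + (S.lcm g).factorization p := add_le_add hfact hMlcm
end
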